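/- arXiv:2301.13092 — 3 statements merged into one kernel-verified Lean document; each statement's English description precedes it below -/
import Mathlib

section
/- Let π be an irreducible ψ-generic representation of SO_{2l}(F_q) with normalized Bessel function B_{π,ψ}. If t ∈ T_{SO_{2l}} (the diagonal torus of SO_{2l}(F_q)) satisfies B_{π,ψ}(t) ≠ 0, then t lies in the center of SO_{2l}(F_q), i.e. t = ±I_{2l}. -/
/-!
Common definitions for formalizing "A Converse Theorem for Split SO(2l) over Finite Fields"
(Hazeltine–Liu).  We work with the split special orthogonal groups realized as sets of
matrices over a finite field `F` of odd characteristic, and with complex representations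
encoded as functions from matrices to linear endomorphisms that are multiplicative on the
relevant matrix group.
-/

open scoped Classical BigOperators

noncomputable section

namespace SOConverse

/-- Entry of a square matrix indexed by natural numbers (`0` out of range). -/
def ent {F : Type} [Zero F] {m : ℕ} (A : Matrix (Fin m) (Fin m) F) (i j : ℕ) : F :=
  if h : i < m ∧ j < m then A ⟨i, h.1⟩ ⟨j, h.2⟩ else 0

/-- The antidiagonal `m × m` matrix `J_m`. -/
def matJ (F : Type) [Field F] (m : ℕ) : Matrix (Fin m) (Fin m) F :=
  Matrix.of fun i j => if (i : ℕ) + (j : ℕ) + 1 = m then 1 else 0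

/-- The split special orthogonal group `SO_m(F) = {g : det g = 1, ᵗg J g = J}`. -/
def SOset (F : Type) [Field F] (m : ℕ) : Set (Matrix (Fin m) (Fin m) F) :=
  {g | g.det = 1 ∧ g.transpose * matJ F m * g = matJ F m}

/-- `GL_n(F)` as the set of invertible matrices. -/
def GLset (F : Type) [Field F] (n : ℕ) : Set (Matrix (Fin n) (Fin n) F) :=
  {g | IsUnit g.det}

/-- Upper triangular unipotent matrices. -/
def upperUnip (F : Type) [Field F] (m : ℕ) : Set (Matrix (Fin m) (Fin m) F) :=
  {u | (∀ i j : Fin m, (j : ℕ) < (i : ℕ) → u i j = 0) ∧ ∀ i : Fin m, u i i = 1}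

/-- The upper triangular unipotent subgroup `U_{SO_{2l}}`. -/
def USO (F : Type) [Field F] (l : ℕ) : Set (Matrix (Fin (2*l)) (Fin (2*l)) F) :=
  upperUnip F (2*l) ∩ SOset F (2*l)

/-- Invertible diagonal matrices. -/
def diagSet (F : Type) [Field F] (m : ℕ) : Set (Matrix (Fin m) (Fin m) F) :=
  {t | (∀ i j : Fin m, i ≠ j → t i j = 0) ∧ IsUnit t.det}

/-- The diagonal torus `T_{SO_{2l}}`. -/
def TSO (F : Type) [Field F] (l : ℕ) : Set (Matrix (Fin (2*l)) (Fin (2*l)) F) :=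
  diagSet F (2*l) ∩ SOset F (2*l)

/-- The Borel subgroup `B_{SO_{2l}} = T_{SO_{2l}} U_{SO_{2l}}`. -/
def BSO (F : Type) [Field F] (l : ℕ) : Set (Matrix (Fin (2*l)) (Fin (2*l)) F) :=
  {b | ∃ t ∈ TSO F l, ∃ u ∈ USO F l, b = t * u}

/-- The generic character `ψ(u) = ψ(∑_{i=1}^{l-2} u_{i,i+1} + (1/4)u_{l-1,l} - (1/2)u_{l-1,l+1})`
on `U_{SO_{2l}}` (1-based indices as in the paper). -/
def soPsi (F : Type) [Field F] (ψ : AddChar F ℂ) (l : ℕ)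
    (u : Matrix (Fin (2*l)) (Fin (2*l)) F) : ℂ :=
  ψ ((∑ i ∈ Finset.range (l-2), ent u i (i+1))
      + (4 : F)⁻¹ * ent u (l-2) (l-1) - (2 : F)⁻¹ * ent u (l-2) l)

/-- The generic character `ψ(u) = ψ(∑ u_{i,i+1})` on `U_{GL_n}`. -/
def glPsi (F : Type) [Field F] (ψ : AddChar F ℂ) (n : ℕ)
    (u : Matrix (Fin n) (Fin n) F) : ℂ :=
  ψ (∑ i ∈ Finset.range (n-1), ent u i (i+1))

/-- The character `ψ⁻¹(u) = ψ(-∑ u_{i,i+1})` on `U_{GL_n}`. -/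
def glPsiInv (F : Type) [Field F] (ψ : AddChar F ℂ) (n : ℕ)
    (u : Matrix (Fin n) (Fin n) F) : ℂ :=
  ψ (-(∑ i ∈ Finset.range (n-1), ent u i (i+1)))

/-- A complex representation of the subset `S` of `m × m` matrices over `F`:
a finite-dimensional complex vector space together with a map to linear endomorphisms
which is multiplicative on `S`. -/
structure FRep (F : Type) [Field F] (m : ℕ) (S : Set (Matrix (Fin m) (Fin m) F)) where
  V : Type
  [grp : AddCommGroup V]
  [mod : Module ℂ V]
  [fd : FiniteDimensional ℂ V]
  ρ : Matrix (Fin m) (Fin m) F → (V →ₗ[ℂ] V)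
  map_one : ρ 1 = LinearMap.id
  map_mul : ∀ g ∈ S, ∀ h ∈ S, ρ (g * h) = (ρ g).comp (ρ h)

attribute [instance] FRep.grp FRep.mod FRep.fd

/-- Irreducibility: `V ≠ 0` and the only invariant subspaces are `⊥` and `⊤`. -/
def FRep.Irreducible {F : Type} [Field F] {m : ℕ} {S : Set (Matrix (Fin m) (Fin m) F)}
    (π : FRep F m S) : Prop :=
  (∃ v : π.V, v ≠ 0) ∧
    ∀ W : Submodule ℂ π.V, (∀ g ∈ S, ∀ v ∈ W, π.ρ g v ∈ W) → W = ⊥ ∨ W = ⊤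

/-- The unipotent radical of the standard (block upper-triangular) parabolic subgroup of
`SO_m` determined by the set `C` of cut points. -/
def blockUnipRad (F : Type) [Field F] (m : ℕ) (C : Finset ℕ) :
    Set (Matrix (Fin m) (Fin m) F) :=
  {u | u ∈ SOset F m ∧ (∀ i : Fin m, u i i = 1) ∧
    ∀ i j : Fin m, i ≠ j → u i j ≠ 0 → ∃ c ∈ C, (i : ℕ) < c ∧ c ≤ (j : ℕ)}

/-- Cuspidality: `∑_{u ∈ N} π(u) = 0` for the unipotent radical `N` of every proper standard
parabolic subgroup of `SO_m` (given by a nonempty symmetric set of cuts). -/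
def Cuspidal (F : Type) [Field F] [Fintype F] {m : ℕ} (π : FRep F m (SOset F m)) : Prop :=
  ∀ C : Finset ℕ, C.Nonempty → (∀ c ∈ C, 0 < c ∧ c < m ∧ m - c ∈ C) →
    (∑ u : Matrix (Fin m) (Fin m) F,
        (if u ∈ blockUnipRad F m C then π.ρ u else 0)) = 0

section WhBessel

variable (F : Type) [Field F] [Fintype F] (ψ : AddChar F ℂ) (l : ℕ)
variable {V : Type} [AddCommGroup V] [Module ℂ V]

/-- A nonzero `ψ`-Whittaker functional for the action `ρ`. -/
def WhFunctional (ρ : Matrix (Fin (2*l)) (Fin (2*l)) F → (V →ₗ[ℂ] V))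
    (Γ : V →ₗ[ℂ] ℂ) : Prop :=
  Γ ≠ 0 ∧ ∀ u ∈ USO F l, ∀ v : V, Γ (ρ u v) = soPsi F ψ l u * Γ v

/-- `ψ`-genericity. -/
def GenericOf (ρ : Matrix (Fin (2*l)) (Fin (2*l)) F → (V →ₗ[ℂ] V)) : Prop :=
  ∃ Γ : V →ₗ[ℂ] ℂ, WhFunctional F ψ l ρ Γ

/-- The `ψ`-Whittaker model `{g ↦ Γ(ρ(g)v)}`. -/
def WhModel (ρ : Matrix (Fin (2*l)) (Fin (2*l)) F → (V →ₗ[ℂ] V)) :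
    Set (Matrix (Fin (2*l)) (Fin (2*l)) F → ℂ) :=
  {W | ∃ Γ : V →ₗ[ℂ] ℂ, WhFunctional F ψ l ρ Γ ∧ ∃ v : V, W = fun g => Γ (ρ g v)}

/-- `B` is the normalized Bessel function of the (generic) action `ρ`:
`B(g) = Γ(ρ(g)v₀)/Γ(v₀)` where `v₀ = |U|⁻¹ ∑_{u ∈ U} ψ(u)⁻¹ ρ(u) v` and `Γ(v₀) ≠ 0`. -/
def IsBesselOf (ρ : Matrix (Fin (2*l)) (Fin (2*l)) F → (V →ₗ[ℂ] V))
    (B : Matrix (Fin (2*l)) (Fin (2*l)) F → ℂ) : Prop :=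
  ∃ Γ : V →ₗ[ℂ] ℂ, WhFunctional F ψ l ρ Γ ∧
    ∃ v v₀ : V,
      (v₀ = ((USO F l).ncard : ℂ)⁻¹ •
          ∑ u : Matrix (Fin (2*l)) (Fin (2*l)) F,
            (if u ∈ USO F l then (soPsi F ψ l u)⁻¹ • ρ u v else 0)) ∧
      Γ v₀ ≠ 0 ∧ ∀ g, B g = Γ (ρ g v₀) / Γ v₀

end WhBessel

/-- The matrix `c = diag(I_{l-1}, [[0,1],[1,0]], I_{l-1})` realizing the outer automorphism. -/
def cmat (F : Type) [Field F] (l : ℕ) : Matrix (Fin (2*l)) (Fin (2*l)) F :=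
  Matrix.of fun i j =>
    if ((i : ℕ) = l-1 ∧ (j : ℕ) = l) ∨ ((i : ℕ) = l ∧ (j : ℕ) = l-1) then 1
    else if i = j ∧ (i : ℕ) ≠ l-1 ∧ (i : ℕ) ≠ l then 1 else 0

/-- `t̃ = diag(I_{l-1}, -1/2, -2, I_{l-1})`. -/
def ttilde (F : Type) [Field F] (l : ℕ) : Matrix (Fin (2*l)) (Fin (2*l)) F :=
  Matrix.of fun i j =>
    if i = j then (if (i : ℕ) = l-1 then -(2:F)⁻¹ else if (i : ℕ) = l then -2 else 1) else 0

/-- `t_n' = t̃` if `n` is odd and `I` if `n` is even. -/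
def tprime (F : Type) [Field F] (l n : ℕ) : Matrix (Fin (2*l)) (Fin (2*l)) F :=
  if n % 2 = 1 then ttilde F l else 1

/-- `a* = J_n ᵗa⁻¹ J_n`. -/
def astar {F : Type} [Field F] {n : ℕ} (a : Matrix (Fin n) (Fin n) F) :
    Matrix (Fin n) (Fin n) F :=
  matJ F n * a⁻¹.transpose * matJ F n

/-- `t_n(x) = diag(x, I_{2l-2n}, x*) ∈ SO_{2l}`. -/
def tmat (F : Type) [Field F] (l n : ℕ) (x : Matrix (Fin n) (Fin n) F) :
    Matrix (Fin (2*l)) (Fin (2*l)) F :=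
  Matrix.of fun i j =>
    if (i : ℕ) < n ∧ (j : ℕ) < n then ent x (i : ℕ) (j : ℕ)
    else if 2*l-n ≤ (i : ℕ) ∧ 2*l-n ≤ (j : ℕ) then
      ent (astar x) ((i : ℕ) - (2*l-n)) ((j : ℕ) - (2*l-n))
    else if i = j then 1 else 0

/-- 0-1 permutation matrices. -/
def IsPermMatrix {F : Type} [Field F] {m : ℕ} (w : Matrix (Fin m) (Fin m) F) : Prop :=
  (∀ i j, w i j = 0 ∨ w i j = 1) ∧ (∀ i, ∃! j, w i j = 1) ∧ (∀ j, ∃! i, w i j = 1)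

/-- The Weyl group of `SO_{2l}` realized as permutation matrices in `SO_{2l}`. -/
def WeylSO (F : Type) [Field F] (l : ℕ) : Set (Matrix (Fin (2*l)) (Fin (2*l)) F) :=
  {w | w ∈ SOset F (2*l) ∧ IsPermMatrix w}

/-- The simple roots of `SO_{2l}` as formal exponent vectors (1-based `i`, `1 ≤ i ≤ l`):
`α_i = ε_{i-1} - ε_i` for `i < l` and `α_l = ε_{l-2} + ε_{l-1}` (0-based `ε`'s). -/
def simpleRoot (l i : ℕ) : ℕ → ℤ :=
  if i < l then fun k => (if k = i-1 then 1 else 0) - (if k = i then 1 else 0)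
  else fun k => (if k = l-2 then 1 else 0) + (if k = l-1 then 1 else 0)

/-- Positive roots of type `D_l` as exponent vectors: `ε_i - ε_j`, `ε_i + ε_j` for `i < j < l`. -/
def IsPosRoot (l : ℕ) (e : ℕ → ℤ) : Prop :=
  ∃ i j : ℕ, i < j ∧ j < l ∧
    ((e = fun k => (if k = i then 1 else 0) - (if k = j then 1 else 0)) ∨
     (e = fun k => (if k = i then 1 else 0) + (if k = j then 1 else 0)))

def IsNegRoot (l : ℕ) (e : ℕ → ℤ) : Prop := IsPosRoot l (fun k => -(e k))

def IsSimpleRoot (l : ℕ) (e : ℕ → ℤ) : Prop := ∃ i, 1 ≤ i ∧ i ≤ l ∧ e = simpleRoot l i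

/-- The action of a Weyl element `w` on the exponent vector of a root,
`(wα)(t) = α(w⁻¹ t w)`. -/
def weylAct {F : Type} [Field F] (l : ℕ) (w : Matrix (Fin (2*l)) (Fin (2*l)) F)
    (e : ℕ → ℤ) : ℕ → ℤ :=
  fun k => ∑ p ∈ Finset.range l,
    e p * ((if ent w k p = 1 then 1 else 0) - (if ent w (2*l-1-k) p = 1 then 1 else 0))

/-- `w` supports Bessel functions: `wα` is negative or simple for every simple root `α`. -/
def SupportsBessel {F : Type} [Field F] (l : ℕ)
    (w : Matrix (Fin (2*l)) (Fin (2*l)) F) : Prop :=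
  ∀ i, 1 ≤ i → i ≤ l →
    IsNegRoot l (weylAct l w (simpleRoot l i)) ∨ IsSimpleRoot l (weylAct l w (simpleRoot l i))

/-- The Bessel support `B(SO_{2l})`. -/
def BesselSupport (F : Type) [Field F] (l : ℕ) : Set (Matrix (Fin (2*l)) (Fin (2*l)) F) :=
  {w | w ∈ WeylSO F l ∧ SupportsBessel l w}

/-- `w̃_n` (for `1 ≤ n ≤ l-1`): block matrix with blocks `(n, l-n-1, 2, l-n-1, n)`,
`I_n` in corners, `I_{l-n-1}` in positions (2,2), (4,4) and central `X = J_2` (n odd),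
`I_2` (n even). -/
def wtilden (F : Type) [Field F] (l n : ℕ) : Matrix (Fin (2*l)) (Fin (2*l)) F :=
  Matrix.of fun i j =>
    if (i : ℕ) < n then (if (j : ℕ) = (i : ℕ) + (2*l-n) then 1 else 0)
    else if (i : ℕ) < l-1 then (if j = i then 1 else 0)
    else if (i : ℕ) < l+1 then
      (if n % 2 = 1 then (if (i : ℕ) + (j : ℕ) = 2*l-1 then 1 else 0)
       else (if j = i then 1 else 0))
    else if (i : ℕ) < 2*l-n then (if j = i then 1 else 0)
    else (if (j : ℕ) + (2*l-n) = (i : ℕ) then 1 else 0)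

/-- `w̃'_l`. -/
def wtildelp (F : Type) [Field F] (l : ℕ) : Matrix (Fin (2*l)) (Fin (2*l)) F :=
  if l % 2 = 0 then
    Matrix.of fun i j => if (j : ℕ) = (i : ℕ) + l ∨ (i : ℕ) = (j : ℕ) + l then 1 else 0
  else
    Matrix.of fun i j =>
      if (i : ℕ) < l-1 then (if (j : ℕ) = (i : ℕ) + l then 1 else 0)
      else if (i : ℕ) = l-1 then (if (j : ℕ) = 0 then 1 else 0)
      else if (i : ℕ) = l then (if (j : ℕ) = 2*l-1 then 1 else 0)
      else (if (j : ℕ) + l = (i : ℕ) then 1 else 0)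

/-- `w̃_l = w̃'_l` if `l` even, `c w̃'_l c` if `l` odd. -/
def wtildel (F : Type) [Field F] (l : ℕ) : Matrix (Fin (2*l)) (Fin (2*l)) F :=
  if l % 2 = 0 then wtildelp F l else cmat F l * wtildelp F l * cmat F l

/-- `B_n(SO_{2l})` for `1 ≤ n ≤ l-2`. -/
def Bset (F : Type) [Field F] (l n : ℕ) : Set (Matrix (Fin (2*l)) (Fin (2*l)) F) :=
  {w | w ∈ BesselSupport F l ∧
    ∃ w' : Matrix (Fin n) (Fin n) F, IsPermMatrix w' ∧ w = tmat F l n w' * wtilden F l n}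

/-- `B_{l-1}(SO_{2l})`. -/
def Bsetlm1 (F : Type) [Field F] (l : ℕ) : Set (Matrix (Fin (2*l)) (Fin (2*l)) F) :=
  {w | w ∈ BesselSupport F l ∧
    (∃ w' : Matrix (Fin l) (Fin l) F, IsPermMatrix w' ∧ w = tmat F l l w' * wtildel F l) ∧
    cmat F l * w * cmat F l = w}

/-- `B_l(SO_{2l})`. -/
def Bsetl (F : Type) [Field F] (l : ℕ) : Set (Matrix (Fin (2*l)) (Fin (2*l)) F) :=
  {w | w ∈ BesselSupport F l ∧
    (∃ w' : Matrix (Fin l) (Fin l) F, IsPermMatrix w' ∧ w = tmat F l l w' * wtildel F l) ∧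
    cmat F l * w * cmat F l ≠ w}

/-- `B_l^c(SO_{2l}) = {cwc : w ∈ B_l(SO_{2l})}`. -/
def Bsetlc (F : Type) [Field F] (l : ℕ) : Set (Matrix (Fin (2*l)) (Fin (2*l)) F) :=
  {x | ∃ w ∈ Bsetl F l, x = cmat F l * w * cmat F l}

/-- The family `B_0, B_1, …, B_l, B_l^c` indexed by `0, …, l+1`. -/
def Bfam (F : Type) [Field F] (l : ℕ) : ℕ → Set (Matrix (Fin (2*l)) (Fin (2*l)) F) :=
  fun n =>
    if n = 0 then {1}
    else if n ≤ l-2 then Bset F l n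
    else if n = l-1 then Bsetlm1 F l
    else if n = l then Bsetl F l
    else Bsetlc F l

/-- The matrix `[[0, w''],[1, 0]]` built from `w'' ∈ GL_{l-1}`. -/
def cornerForm (F : Type) [Field F] (l : ℕ) (w'' : Matrix (Fin (l-1)) (Fin (l-1)) F) :
    Matrix (Fin l) (Fin l) F :=
  Matrix.of fun i j =>
    if (i : ℕ) = l-1 then (if (j : ℕ) = 0 then 1 else 0)
    else if (j : ℕ) = 0 then 0
    else ent w'' (i : ℕ) ((j : ℕ) - 1)

/-- `l_n(a) = diag(a, 1, a*) ∈ SO_{2n+1}`. -/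
def lmat (F : Type) [Field F] (n : ℕ) (a : Matrix (Fin n) (Fin n) F) :
    Matrix (Fin (2*n+1)) (Fin (2*n+1)) F :=
  Matrix.of fun i j =>
    if (i : ℕ) < n ∧ (j : ℕ) < n then ent a (i : ℕ) (j : ℕ)
    else if (i : ℕ) = n ∧ (j : ℕ) = n then 1
    else if n < (i : ℕ) ∧ n < (j : ℕ) then ent (astar a) ((i : ℕ) - (n+1)) ((j : ℕ) - (n+1))
    else 0

/-- The unipotent radical `V_n` of the Siegel parabolic `Q_n = L_n V_n ⊂ SO_{2n+1}`. -/
def Vset (F : Type) [Field F] (n : ℕ) : Set (Matrix (Fin (2*n+1)) (Fin (2*n+1)) F) :=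
  {u | u ∈ SOset F (2*n+1) ∧
    ∀ i j : Fin (2*n+1), ((j : ℕ) < n ∨ n ≤ (i : ℕ)) → u i j = if i = j then 1 else 0}

/-- `w_n = [[0,0,I_n],[0,(-1)^n,0],[I_n,0,0]] ∈ SO_{2n+1}`. -/
def wmat (F : Type) [Field F] (n : ℕ) : Matrix (Fin (2*n+1)) (Fin (2*n+1)) F :=
  Matrix.of fun i j =>
    if (i : ℕ) < n then (if (j : ℕ) = (i : ℕ) + n + 1 then 1 else 0)
    else if (i : ℕ) = n then (if (j : ℕ) = n then (-1)^n else 0)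
    else (if (j : ℕ) + n + 1 = (i : ℕ) then 1 else 0)

/-- `d_n = diag(-1, 1, …, (-1)^n)`. -/
def dmat (F : Type) [Field F] (n : ℕ) : Matrix (Fin n) (Fin n) F :=
  Matrix.of fun i j => if i = j then (-1)^((i : ℕ)+1) else 0

/-- Sections of the induced representation `I(τ) = Ind_{Q_n}^{SO_{2n+1}} τ`. -/
def IndSec (F : Type) [Field F] (n : ℕ) (τ : FRep F n (GLset F n)) :
    Set (Matrix (Fin (2*n+1)) (Fin (2*n+1)) F → τ.V) :=
  {ξ | ∀ a : Matrix (Fin n) (Fin n) F, IsUnit a.det → ∀ u ∈ Vset F n,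
      ∀ g ∈ SOset F (2*n+1), ξ (lmat F n a * u * g) = τ.ρ a (ξ g)}

/-- The space `I(τ, ψ⁻¹)` spanned by the functions `f_ξ(g, a) = Λ_τ(τ(a)ξ(g))`. -/
def Ispace (F : Type) [Field F] (n : ℕ) (τ : FRep F n (GLset F n)) (Λ : τ.V →ₗ[ℂ] ℂ) :
    Submodule ℂ (Matrix (Fin (2*n+1)) (Fin (2*n+1)) F → Matrix (Fin n) (Fin n) F → ℂ) :=
  Submodule.span ℂ {f | ∃ ξ ∈ IndSec F n τ, f = fun g a => Λ (τ.ρ a (ξ g))}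

/-- The intertwining operator `M(τ,ψ⁻¹)f(h,a) = ∑_{u ∈ V_n} f(w_n u h, d_n a*)`. -/
def Mop (F : Type) [Field F] [Fintype F] (n : ℕ)
    (f : Matrix (Fin (2*n+1)) (Fin (2*n+1)) F → Matrix (Fin n) (Fin n) F → ℂ) :
    Matrix (Fin (2*n+1)) (Fin (2*n+1)) F → Matrix (Fin n) (Fin n) F → ℂ :=
  fun h a => ∑ u : Matrix (Fin (2*n+1)) (Fin (2*n+1)) F,
    if u ∈ Vset F n then f (wmat F n * u * h) (dmat F n * astar a) else 0

/-- Insert a new basis vector (fixed by the matrix) at position `k`. -/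
def insMid (F : Type) [Field F] (m M k : ℕ) (A : Matrix (Fin m) (Fin m) F) :
    Matrix (Fin M) (Fin M) F :=
  Matrix.of fun i j =>
    if (i : ℕ) = k ∧ (j : ℕ) = k then 1
    else if (i : ℕ) = k ∨ (j : ℕ) = k then 0
    else ent A (if (i : ℕ) < k then (i : ℕ) else (i : ℕ) - 1)
               (if (j : ℕ) < k then (j : ℕ) else (j : ℕ) - 1)

/-- `diag(I_k, B, I_{M-k-m})`. -/
def padDiag (F : Type) [Field F] (M k m : ℕ) (B : Matrix (Fin m) (Fin m) F) :
    Matrix (Fin M) (Fin M) F :=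
  Matrix.of fun i j =>
    if k ≤ (i : ℕ) ∧ (i : ℕ) < k + m ∧ k ≤ (j : ℕ) ∧ (j : ℕ) < k + m then
      ent B ((i : ℕ) - k) ((j : ℕ) - k)
    else if i = j then 1 else 0

/-- `M̃ = [[1/4,1/2,-1/2],[1/2,0,1],[-1/2,1,1]]`. -/
def Mtilde3 (F : Type) [Field F] : Matrix (Fin 3) (Fin 3) F :=
  !![(4:F)⁻¹, (2:F)⁻¹, -(2:F)⁻¹; (2:F)⁻¹, 0, 1; -(2:F)⁻¹, 1, 1]

/-- `[[2,-1],[1,1/2]]`. -/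
def M2small (F : Type) [Field F] : Matrix (Fin 2) (Fin 2) F :=
  !![(2:F), -1; 1, (2:F)⁻¹]

/-- `M = diag(I_{l-1}, M̃, I_{l-1})` of size `2l+1`. -/
def embM (F : Type) [Field F] (l : ℕ) : Matrix (Fin (2*l+1)) (Fin (2*l+1)) F :=
  padDiag F (2*l+1) (l-1) 3 (Mtilde3 F)

/-- The embedding `SO_{2l} ↪ SO_{2l+1}`, `g ↦ M⁻¹ (g with middle 1 inserted) M`. -/
def embSO2l (F : Type) [Field F] (l : ℕ) (g : Matrix (Fin (2*l)) (Fin (2*l)) F) :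
    Matrix (Fin (2*l+1)) (Fin (2*l+1)) F :=
  (embM F l)⁻¹ * insMid F (2*l) (2*l+1) l g * embM F l

/-- The embedding `SO_{2n+1} ↪ SO_{2l}` (`n < l`) through the Levi `GL_{l-n-1} × SO_{2n+2}`. -/
def embSOodd (F : Type) [Field F] (l n : ℕ) (g : Matrix (Fin (2*n+1)) (Fin (2*n+1)) F) :
    Matrix (Fin (2*l)) (Fin (2*l)) F :=
  padDiag F (2*l) (l-n-1) (2*n+2)
    ((padDiag F (2*n+2) n 2 (M2small F))⁻¹ * insMid F (2*n+1) (2*n+2) n g *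
      padDiag F (2*n+2) n 2 (M2small F))

/-- `w_{l,l} = diag((1/2)I_l, 1, 2I_l)`. -/
def wll (F : Type) [Field F] (l : ℕ) : Matrix (Fin (2*l+1)) (Fin (2*l+1)) F :=
  Matrix.of fun i j =>
    if i = j then (if (i : ℕ) < l then (2:F)⁻¹ else if (i : ℕ) = l then 1 else 2) else 0

/-- The block permutation matrix `w^{l,n}`. -/
def wln (F : Type) [Field F] (l n : ℕ) : Matrix (Fin (2*l)) (Fin (2*l)) F :=
  Matrix.of fun i j =>
    if (i : ℕ) < n then (if (j : ℕ) = (i : ℕ) + (l-n-1) then 1 else 0)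
    else if (i : ℕ) < l-1 then (if (j : ℕ) + n = (i : ℕ) then 1 else 0)
    else if (i : ℕ) < l+1 then (if j = i then 1 else 0)
    else if (i : ℕ) < 2*l-n then (if (j : ℕ) = (i : ℕ) + n then 1 else 0)
    else (if (j : ℕ) + (l-n-1) = (i : ℕ) then 1 else 0)

/-- The set `R^{l,n}` of lower unipotent matrices in `SO_{2l}` with free `(l-n-1) × n`
block `x` below the leading identity block and the dual block `x'`. -/
def Rset (F : Type) [Field F] (l n : ℕ) : Set (Matrix (Fin (2*l)) (Fin (2*l)) F) :=
  {r | r ∈ SOset F (2*l) ∧ (∀ i : Fin (2*l), r i i = 1) ∧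
    ∀ i j : Fin (2*l), i ≠ j → r i j ≠ 0 →
      ((n ≤ (i : ℕ) ∧ (i : ℕ) < l-1 ∧ (j : ℕ) < n) ∨
       (2*l-n ≤ (i : ℕ) ∧ l+1 ≤ (j : ℕ) ∧ (j : ℕ) < 2*l-n))}

/-- The zeta sum `Ψ(W, f)` in the case `n = l`. -/
def ZetaTop (F : Type) [Field F] [Fintype F] (l : ℕ)
    (W : Matrix (Fin (2*l)) (Fin (2*l)) F → ℂ)
    (f : Matrix (Fin (2*l+1)) (Fin (2*l+1)) F → Matrix (Fin l) (Fin l) F → ℂ) : ℂ :=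
  ((USO F l).ncard : ℂ)⁻¹ *
    ∑ g : Matrix (Fin (2*l)) (Fin (2*l)) F,
      if g ∈ SOset F (2*l) then W g * f (wll F l * embSO2l F l g) 1 else 0

/-- The zeta sum `Ψ(W, f)` in the case `n < l`. -/
def ZetaLow (F : Type) [Field F] [Fintype F] (l n : ℕ)
    (W : Matrix (Fin (2*l)) (Fin (2*l)) F → ℂ)
    (f : Matrix (Fin (2*n+1)) (Fin (2*n+1)) F → Matrix (Fin n) (Fin n) F → ℂ) : ℂ :=
  ((upperUnip F (2*n+1) ∩ SOset F (2*n+1)).ncard : ℂ)⁻¹ *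
    ∑ g : Matrix (Fin (2*n+1)) (Fin (2*n+1)) F,
      if g ∈ SOset F (2*n+1) then
        (∑ r : Matrix (Fin (2*l)) (Fin (2*l)) F,
           if r ∈ Rset F l n then
             W (r * (wln F l n * embSOodd F l n g * (wln F l n)⁻¹))
           else 0) * f g 1
      else 0

/-- The zeta sum `Ψ(W, f)` for `1 ≤ n ≤ l`. -/
def GenZeta (F : Type) [Field F] [Fintype F] (l n : ℕ)
    (W : Matrix (Fin (2*l)) (Fin (2*l)) F → ℂ)
    (f : Matrix (Fin (2*n+1)) (Fin (2*n+1)) F → Matrix (Fin n) (Fin n) F → ℂ) : ℂ :=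
  if h : n = l then
    ZetaTop F l W (fun g a => f (cast (by rw [h]) g) (cast (by rw [h]) a))
  else ZetaLow F l n W f

/-- `τ` is a `ψ`-generic representation of `GL_n`. -/
def GLGeneric (F : Type) [Field F] (ψ : AddChar F ℂ) (n : ℕ)
    (τ : FRep F n (GLset F n)) : Prop :=
  ∃ Λ : τ.V →ₗ[ℂ] ℂ, Λ ≠ 0 ∧ ∀ u ∈ upperUnip F n, ∀ v : τ.V,
    Λ (τ.ρ u v) = glPsi F ψ n u * Λ v

/-- A nonzero `ψ⁻¹`-Whittaker functional on `τ`. -/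
def IsGLWhittakerInv (F : Type) [Field F] (ψ : AddChar F ℂ) (n : ℕ)
    (τ : FRep F n (GLset F n)) (Λ : τ.V →ₗ[ℂ] ℂ) : Prop :=
  Λ ≠ 0 ∧ ∀ u ∈ upperUnip F n, ∀ v : τ.V, Λ (τ.ρ u v) = glPsiInv F ψ n u * Λ v

/-- `γ` is a gamma factor `γ(π × τ, ψ)`: `γ Ψ(W,f) = Ψ(W, M(τ,ψ⁻¹)f)` for all `W` in the
`ψ`-Whittaker model of `π` (given in terms of its action `ρ`) and all `f ∈ I(τ,ψ⁻¹)`. -/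
def IsGammaFactorOf (F : Type) [Field F] [Fintype F] (ψ : AddChar F ℂ) (l n : ℕ)
    {V : Type} [AddCommGroup V] [Module ℂ V]
    (ρ : Matrix (Fin (2*l)) (Fin (2*l)) F → (V →ₗ[ℂ] V))
    (τ : FRep F n (GLset F n)) (γ : ℂ) : Prop :=
  ∀ Λ : τ.V →ₗ[ℂ] ℂ, IsGLWhittakerInv F ψ n τ Λ →
    ∀ W ∈ WhModel F ψ l ρ, ∀ f ∈ Ispace F n τ Λ,
      γ * GenZeta F l n W f = GenZeta F l n W (Mop F n f)

/-- `i` and `j` lie in the same block determined by the cuts `C`. -/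
def sameBlock (C : Finset ℕ) (i j : ℕ) : Prop := ∀ c ∈ C, (i < c ↔ j < c)

/-- The Levi subgroup of the parabolic subgroup of `SO_m` obtained by conjugating the
standard parabolic with cuts `C` by `h`. -/
def LeviSet (F : Type) [Field F] (m : ℕ) (C : Finset ℕ) (h : Matrix (Fin m) (Fin m) F) :
    Set (Matrix (Fin m) (Fin m) F) :=
  {x | ∃ d, d ∈ SOset F m ∧ (∀ i j : Fin m, ¬ sameBlock C (i : ℕ) (j : ℕ) → d i j = 0) ∧
    x = h * d * h⁻¹}

/-- The unipotent radical of the same parabolic subgroup. -/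
def URadSet (F : Type) [Field F] (m : ℕ) (C : Finset ℕ) (h : Matrix (Fin m) (Fin m) F) :
    Set (Matrix (Fin m) (Fin m) F) :=
  {x | ∃ u ∈ blockUnipRad F m C, x = h * u * h⁻¹}

/-- The space of the induced representation `Ind_Q^{SO_m} σ` (with `σ` inflated trivially
across the unipotent radical), on which `SO_m` acts by right translation. -/
def IndSet (F : Type) [Field F] (m : ℕ) (C : Finset ℕ) (h : Matrix (Fin m) (Fin m) F)
    (σ : FRep F m (LeviSet F m C h)) : Set (Matrix (Fin m) (Fin m) F → σ.V) :=
  {f | ∀ a ∈ LeviSet F m C h, ∀ u ∈ URadSet F m C h, ∀ g ∈ SOset F m,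
      f (a * u * g) = σ.ρ a (f g)}

/-- The unipotent subgroup `N^{l-n} ⊂ SO_{2l}`. -/
def Nset (F : Type) [Field F] (l n : ℕ) : Set (Matrix (Fin (2*l)) (Fin (2*l)) F) :=
  {v | v ∈ SOset F (2*l) ∧ v ∈ upperUnip F (2*l) ∧
    ∀ i j : Fin (2*l), l-n-1 ≤ (i : ℕ) → (i : ℕ) < l+n+1 → l-n-1 ≤ (j : ℕ) →
      (j : ℕ) < l+n+1 → v i j = if i = j then 1 else 0}

/-- The character `ψ'` of `N^{l-n}`. -/
def psiPrime (F : Type) [Field F] (ψ : AddChar F ℂ) (l n : ℕ)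
    (v : Matrix (Fin (2*l)) (Fin (2*l)) F) : ℂ :=
  ψ ((∑ i ∈ Finset.range (l-n-2), ent v i (i+1))
      + (4 : F)⁻¹ * ent v (l-n-2) (l-1) - (2 : F)⁻¹ * ent v (l-n-2) l)

/-- Isomorphism of two representations of the same matrix set. -/
def FRepIso {F : Type} [Field F] {m : ℕ} {S : Set (Matrix (Fin m) (Fin m) F)}
    (π π' : FRep F m S) : Prop :=
  ∃ T : π.V ≃ₗ[ℂ] π'.V, ∀ g ∈ S, ∀ v : π.V, T (π.ρ g v) = π'.ρ g (T v)

/-- `π ≅ c·π'`, where `(c·π')(g) = π'(cgc)`. -/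
def FRepIsoConj {F : Type} [Field F] {l : ℕ}
    (π π' : FRep F (2*l) (SOset F (2*l))) : Prop :=
  ∃ T : π.V ≃ₗ[ℂ] π'.V, ∀ g ∈ SOset F (2*l), ∀ v : π.V,
    T (π.ρ g v) = π'.ρ (cmat F l * g * cmat F l) (T v)

/-- `π` and `π'` have the same central character (the center of `SO_{2l}` consisting of
the scalar matrices it contains). -/
def SameCentralChar {F : Type} [Field F] {m : ℕ}
    (π π' : FRep F m (SOset F m)) : Prop :=
  ∀ d : F, (d • (1 : Matrix (Fin m) (Fin m) F)) ∈ SOset F m →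
    ∃ s : ℂ, π.ρ (d • 1) = s • LinearMap.id ∧ π'.ρ (d • 1) = s • LinearMap.id

/-- The section `ξ_v ∈ I(τ)` supported on `Q_n` with `ξ_v(l_n(a)u) = τ(a)v`. -/
def xiV (F : Type) [Field F] (n : ℕ) (τ : FRep F n (GLset F n)) (v : τ.V) :
    Matrix (Fin (2*n+1)) (Fin (2*n+1)) F → τ.V :=
  fun g =>
    if h : ∃ a : Matrix (Fin n) (Fin n) F, IsUnit a.det ∧ ∃ u ∈ Vset F n, g = lmat F n a * u
    then τ.ρ h.choose v else 0

/-- The subset `Q_l w_l V_l ⊂ SO_{2l+1}`. -/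
def QwlVl (F : Type) [Field F] (l : ℕ) : Set (Matrix (Fin (2*l+1)) (Fin (2*l+1)) F) :=
  {x | ∃ a : Matrix (Fin l) (Fin l) F, IsUnit a.det ∧ ∃ u ∈ Vset F l, ∃ v ∈ Vset F l,
      x = lmat F l a * u * wmat F l * v}

section dev
open Matrix
variable {F : Type} [Field F]

/-- the generator matrix -/
def gE (l : ℕ) (a b : Fin (2*l)) (c : F) : Matrix (Fin (2*l)) (Fin (2*l)) F :=
  Matrix.of fun p q => (if p = q then (1:F) else 0) + (if p = a ∧ q = b then c else 0)
    - (if p = b.rev ∧ q = a.rev then c else 0)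

variable {l : ℕ}

lemma rev_ne (i : Fin (2*l)) : i.rev ≠ i := by
  intro h
  have h2 := congrArg Fin.val h
  have := i.isLt
  rw [Fin.val_rev] at h2
  omega

lemma rev_eq_comm {i j : Fin (2*l)} : i.rev = j ↔ i = j.rev := by
  rw [← Fin.rev_inj, Fin.rev_rev]

lemma gE_mul_apply (a b : Fin (2*l)) (c : F) (u : Matrix (Fin (2*l)) (Fin (2*l)) F)
    (p q : Fin (2*l)) :
    (gE l a b c * u) p q = u p q + (if p = a then c * u b q else 0)
      - (if p = b.rev then c * u a.rev q else 0) := by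
  rw [Matrix.mul_apply]
  simp only [gE, Matrix.of_apply, add_mul, sub_mul, ite_mul, one_mul, zero_mul, ite_and]
  rw [Finset.sum_sub_distrib, Finset.sum_add_distrib]
  congr 1
  · congr 1
    · simp [Finset.sum_ite_eq]
    · by_cases hp : p = a <;> simp [hp, Finset.sum_ite_eq']
  · by_cases hp : p = b.rev <;> simp [hp, Finset.sum_ite_eq']

lemma gE_transpose (a b : Fin (2*l)) (c : F) : (gE l a b c)ᵀ = gE l b a c := by
  funext p q
  simp only [Matrix.transpose_apply, gE, Matrix.of_apply]
  congr 1
  · congr 1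
    · exact if_congr eq_comm rfl rfl
    · exact if_congr and_comm rfl rfl
  · exact if_congr and_comm rfl rfl

lemma val_cond_iff {m : ℕ} (p k : Fin m) : ((p:ℕ) + (k:ℕ) + 1 = m) ↔ k = p.rev := by
  rw [Fin.ext_iff, Fin.val_rev]
  have := p.isLt; have := k.isLt
  omega

lemma J_mul_apply {m : ℕ} (g : Matrix (Fin m) (Fin m) F) (p q : Fin m) :
    (matJ F m * g) p q = g p.rev q := by
  rw [Matrix.mul_apply]
  have : ∀ k : Fin m, (if (p:ℕ) + (k:ℕ) + 1 = m then (1:F) else 0) * g k q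
      = (if k = p.rev then g k q else 0) := by
    intro k
    rw [if_congr (val_cond_iff p k) rfl rfl, ite_mul, one_mul, zero_mul]
  simp only [matJ, Matrix.of_apply, this, Finset.sum_ite_eq', Finset.mem_univ, if_true]

lemma matJ_apply_eq {m : ℕ} (p q : Fin m) :
    matJ F m p q = if q = p.rev then (1:F) else 0 := by
  simp only [matJ, Matrix.of_apply]
  exact if_congr (val_cond_iff p q) rfl rfl

lemma unip_det {m : ℕ} {u : Matrix (Fin m) (Fin m) F} (hu : u ∈ upperUnip F m) :
    u.det = 1 := by
  have hbt : u.BlockTriangular id := by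
    intro i j h
    exact hu.1 i j h
  rw [Matrix.det_of_upperTriangular hbt]
  simp [hu.2]

/-- entry description of gE given genericity conditions -/
lemma gE_apply (a b : Fin (2*l)) (c : F) (p q : Fin (2*l)) :
    gE l a b c p q = (if p = q then (1:F) else 0) + (if p = a ∧ q = b then c else 0)
      - (if p = b.rev ∧ q = a.rev then c else 0) := rfl

lemma gE_unip (a b : Fin (2*l)) (c : F) (hab : a ≠ b) (hlt : (a:ℕ) < (b:ℕ)) :
    gE l a b c ∈ upperUnip F (2*l) := by
  have hrev : (b.rev : ℕ) < (a.rev : ℕ) := by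
    rw [Fin.val_rev, Fin.val_rev]; have := b.isLt; omega
  constructor
  · intro i j hji
    rw [gE_apply]
    have h1 : ¬ (i = j) := by rintro rfl; omega
    have h2 : ¬ (i = a ∧ j = b) := by rintro ⟨rfl, rfl⟩; omega
    have h3 : ¬ (i = b.rev ∧ j = a.rev) := by rintro ⟨rfl, rfl⟩; omega
    rw [if_neg h1, if_neg h2, if_neg h3]; ring
  · intro i
    rw [gE_apply]
    have h2 : ¬ (i = a ∧ i = b) := by rintro ⟨rfl, rfl⟩; exact hab rfl
    have h3 : ¬ (i = b.rev ∧ i = a.rev) := by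
      rintro ⟨rfl, h⟩
      exact hab (Fin.rev_inj.mp (h.symm ▸ rfl : b.rev = a.rev)).symm
    rw [if_pos rfl, if_neg h2, if_neg h3]; ring

lemma gE_SO (a b : Fin (2*l)) (c : F) (hab : a ≠ b) (haRb : a ≠ b.rev)
    (hlt : (a:ℕ) < (b:ℕ)) : gE l a b c ∈ SOset F (2*l) := by
  have hba : b ≠ a := hab.symm
  have haRa : a.rev ≠ a := rev_ne a
  have hbRb : b.rev ≠ b := rev_ne b
  have hbRa : b ≠ a.rev := fun h => haRb (by rw [h, Fin.rev_rev])
  refine ⟨unip_det (gE_unip a b c hab hlt), ?_⟩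
  funext i j
  rw [mul_assoc, gE_transpose]
  rw [show matJ F (2*l) * gE l a b c
      = Matrix.of (fun p q => gE l a b c p.rev q) from
    (by funext p q; exact J_mul_apply _ p q)]
  rw [gE_mul_apply]
  simp only [Matrix.of_apply]
  have hAR : ∀ q, gE l a b c a.rev q = if a.rev = q then (1:F) else 0 := by
    intro q
    rw [gE_apply]
    have h2 : ¬ (a.rev = a ∧ q = b) := by rintro ⟨h, -⟩; exact haRa h
    have h3 : ¬ (a.rev = b.rev ∧ q = a.rev) := by
      rintro ⟨h, -⟩; exact hab (Fin.rev_inj.mp h)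
    rw [if_neg h2, if_neg h3]; ring
  have hBR : ∀ q, gE l a b c b.rev.rev q = if b = q then (1:F) else 0 := by
    intro q
    rw [Fin.rev_rev, gE_apply]
    have h2 : ¬ (b = a ∧ q = b) := by rintro ⟨h, -⟩; exact hba h
    have h3 : ¬ (b = b.rev ∧ q = a.rev) := by rintro ⟨h, -⟩; exact hbRb h.symm
    rw [if_neg h2, if_neg h3]; ring
  rw [hAR, hBR, matJ_apply_eq, gE_apply]
  clear hAR hBR
  have hi := i.isLt; have hj := j.isLt; have ha := a.isLt; have hb := b.isLt
  simp only [Fin.ext_iff, Fin.val_rev] at hab haRb hba haRa hbRb hbRa ⊢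
  split_ifs <;> first | ring1 | (exfalso; omega)
lemma so_mul {m : ℕ} {g h : Matrix (Fin m) (Fin m) F} (hg : g ∈ SOset F m)
    (hh : h ∈ SOset F m) : g * h ∈ SOset F m := by
  refine ⟨by rw [Matrix.det_mul, hg.1, hh.1, mul_one], ?_⟩
  have e : (g*h).transpose * matJ F m * (g*h)
      = h.transpose * (g.transpose * matJ F m * g) * h := by
    rw [Matrix.transpose_mul]; noncomm_ring
  rw [e, hg.2]
  exact hh.2

lemma unip_mul {m : ℕ} {g h : Matrix (Fin m) (Fin m) F} (hg : g ∈ upperUnip F m)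
    (hh : h ∈ upperUnip F m) : g * h ∈ upperUnip F m := by
  constructor
  · intro i j hji
    rw [Matrix.mul_apply]
    apply Finset.sum_eq_zero
    intro k _
    rcases lt_or_ge (k : ℕ) (i : ℕ) with hk | hk
    · rw [hg.1 i k hk, zero_mul]
    · rw [hh.1 k j (lt_of_lt_of_le hji hk), mul_zero]
  · intro i
    rw [Matrix.mul_apply]
    rw [Finset.sum_eq_single i]
    · rw [hg.2, hh.2, one_mul]
    · intro k _ hk
      rcases lt_or_ge (k : ℕ) (i : ℕ) with h' | h'
      · rw [hg.1 i k h', zero_mul]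
      · have : (i:ℕ) < (k:ℕ) := lt_of_le_of_ne h' (fun hc => hk (Fin.ext hc.symm))
        rw [hh.1 k i this, mul_zero]
    · intro hi; exact absurd (Finset.mem_univ i) hi

lemma uso_mul {g h : Matrix (Fin (2*l)) (Fin (2*l)) F} (hg : g ∈ USO F l)
    (hh : h ∈ USO F l) : g * h ∈ USO F l :=
  ⟨unip_mul hg.1 hh.1, so_mul hg.2 hh.2⟩

lemma so_entry_sum {m : ℕ} {u : Matrix (Fin m) (Fin m) F} (hu : u ∈ SOset F m)
    (i j : Fin m) : ∑ q : Fin m, u q i * u q.rev j = matJ F m i j := by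
  have h := hu.2
  rw [mul_assoc] at h
  have h2 := congrFun (congrFun h i) j
  rw [Matrix.mul_apply] at h2
  rw [← h2]
  apply Finset.sum_congr rfl
  intro q _
  rw [Matrix.transpose_apply, J_mul_apply]

lemma mid_zero (hl : 2 ≤ l) (h2 : (2:F) ≠ 0) {u : Matrix (Fin (2*l)) (Fin (2*l)) F}
    (hu : u ∈ USO F l) :
    u ⟨l-1, by omega⟩ ⟨l, by omega⟩ = 0 := by
  have i0lt : l - 1 < 2*l := by omega
  have j0lt : l < 2*l := by omega
  set i0 : Fin (2*l) := ⟨l-1, i0lt⟩ with hi0def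
  set j0 : Fin (2*l) := ⟨l, j0lt⟩ with hj0def
  have key := so_entry_sum hu.2 j0 j0
  have hrev1 : i0.rev = j0 := by rw [Fin.ext_iff, Fin.val_rev]; simp [hi0def, hj0def]; omega
  have hrev2 : j0.rev = i0 := by rw [Fin.ext_iff, Fin.val_rev]; simp [hi0def, hj0def]; omega
  have hne : i0 ≠ j0 := by
    intro h; rw [Fin.ext_iff] at h; simp only [hi0def, hj0def] at h; omega
  have hzero : ∀ q ∈ (Finset.univ : Finset (Fin (2*l))), q ≠ i0 ∧ q ≠ j0 →
      u q j0 * u q.rev j0 = 0 := by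
    intro q _ hq
    have hq1 : (q:ℕ) ≠ l - 1 := fun h => hq.1 (Fin.ext h)
    have hq2 : (q:ℕ) ≠ l := fun h => hq.2 (Fin.ext h)
    rcases lt_or_ge (q:ℕ) (l-1) with h' | h'
    · have hlt : (j0:ℕ) < (q.rev : ℕ) := by
        rw [Fin.val_rev]; have := q.isLt; simp [hj0def]; omega
      rw [hu.1.1 q.rev j0 hlt, mul_zero]
    · have hlt : (j0:ℕ) < (q:ℕ) := by simp [hj0def]; omega
      rw [hu.1.1 q j0 hlt, zero_mul]
  have hadd : ∑ q : Fin (2*l), u q j0 * u q.rev j0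
      = u i0 j0 * u i0.rev j0 + u j0 j0 * u j0.rev j0 :=
    Finset.sum_eq_add i0 j0 hne hzero
      (fun h => absurd (Finset.mem_univ _) h) (fun h => absurd (Finset.mem_univ _) h)
  rw [hadd, hrev1, hrev2, matJ_apply_eq, hrev2] at key
  rw [hu.1.2 j0, if_neg hne.symm, mul_one, one_mul] at key
  have h2x : (2:F) * u i0 j0 = 0 := by linear_combination key
  rcases mul_eq_zero.mp h2x with h | h
  · exact absurd h h2
  · exact h
lemma gE_mul_neg (a b : Fin (2*l)) (c : F) (hab : a ≠ b) (haRb : a ≠ b.rev) :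
    gE l a b c * gE l a b (-c) = 1 := by
  have hba : b ≠ a := hab.symm
  have hbRb : b.rev ≠ b := rev_ne b
  have haRa : a.rev ≠ a := rev_ne a
  have hbRa : b ≠ a.rev := fun h => haRb (by rw [h, Fin.rev_rev])
  funext p q
  rw [gE_mul_apply]
  have hb : ∀ q', gE l a b (-c) b q' = if b = q' then (1:F) else 0 := by
    intro q'
    rw [gE_apply]
    have e1 : ¬ (b = a ∧ q' = b) := fun h => hba h.1
    have e2 : ¬ (b = b.rev ∧ q' = a.rev) := fun h => hbRb h.1.symm
    rw [if_neg e1, if_neg e2]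
    ring
  have hra : ∀ q', gE l a b (-c) a.rev q' = if a.rev = q' then (1:F) else 0 := by
    intro q'
    rw [gE_apply]
    have e1 : ¬ (a.rev = a ∧ q' = b) := fun h => haRa h.1
    have e2 : ¬ (a.rev = b.rev ∧ q' = a.rev) := fun h => hab (Fin.rev_inj.mp h.1)
    rw [if_neg e1, if_neg e2]
    ring
  rw [hb, hra, gE_apply, Matrix.one_apply]
  have hi := p.isLt; have hj := q.isLt; have := a.isLt; have := b.isLt
  simp only [Fin.ext_iff, Fin.val_rev] at hab haRb hba haRa hbRb hbRa ⊢
  split_ifs <;> first | ring1 | (exfalso; omega)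

section torus

variable {d : Fin (2*l) → F}

/-- the explicit inverse torus element -/
def tinv (d : Fin (2*l) → F) : Matrix (Fin (2*l)) (Fin (2*l)) F :=
  Matrix.diagonal (fun i => d i.rev)

lemma diag_conj_apply (d' : Fin (2*l) → F) (u : Matrix (Fin (2*l)) (Fin (2*l)) F)
    (p q : Fin (2*l)) :
    (Matrix.diagonal d * u * Matrix.diagonal d') p q = d p * u p q * d' q := by
  rw [Matrix.mul_diagonal, Matrix.diagonal_mul]

lemma diag_J_cond (hd : ∀ i, d i * d i.rev = 1) :
    (Matrix.diagonal d).transpose * matJ F (2*l) * Matrix.diagonal d = matJ F (2*l) := by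
  rw [Matrix.diagonal_transpose]
  funext i j
  rw [diag_conj_apply, matJ_apply_eq]
  by_cases h : j = i.rev
  · subst h
    rw [if_pos rfl, mul_one]
    linear_combination hd i
  · rw [if_neg h]; ring

lemma diag_SO (hdet : (Matrix.diagonal d).det = 1) (hd : ∀ i, d i * d i.rev = 1) :
    Matrix.diagonal d ∈ SOset F (2*l) :=
  ⟨hdet, diag_J_cond hd⟩

lemma tinv_det (hdet : (Matrix.diagonal d).det = 1) :
    (tinv d).det = 1 := by
  rw [tinv, Matrix.det_diagonal]
  rw [Matrix.det_diagonal] at hdet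
  rw [← hdet]
  exact Fintype.prod_bijective Fin.rev Fin.rev_involutive.bijective _ _ (fun i => rfl)

lemma tinv_J_cond (hd : ∀ i, d i * d i.rev = 1) :
    (tinv d).transpose * matJ F (2*l) * tinv d = matJ F (2*l) := by
  apply diag_J_cond
  intro i
  rw [Fin.rev_rev]
  linear_combination hd i

lemma tinv_SO (hdet : (Matrix.diagonal d).det = 1) (hd : ∀ i, d i * d i.rev = 1) :
    tinv d ∈ SOset F (2*l) :=
  ⟨tinv_det hdet, tinv_J_cond hd⟩

lemma diag_mul_tinv (hd : ∀ i, d i * d i.rev = 1) :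
    Matrix.diagonal d * tinv d = 1 := by
  rw [tinv, Matrix.diagonal_mul_diagonal]
  rw [show (fun i => d i * d i.rev) = fun _ => (1:F) from funext hd, Matrix.diagonal_one]

lemma tinv_mul_diag (hd : ∀ i, d i * d i.rev = 1) :
    tinv d * Matrix.diagonal d = 1 := by
  rw [tinv, Matrix.diagonal_mul_diagonal]
  have : (fun i => d i.rev * d i) = fun _ => (1:F) := by
    funext i; linear_combination hd i
  rw [this, Matrix.diagonal_one]

lemma conj_USO (hd : ∀ i, d i * d i.rev = 1) (hdet : (Matrix.diagonal d).det = 1)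
    {u : Matrix (Fin (2*l)) (Fin (2*l)) F} (hu : u ∈ USO F l) :
    Matrix.diagonal d * u * tinv d ∈ USO F l := by
  constructor
  · constructor
    · intro i j hji
      rw [tinv, diag_conj_apply, hu.1.1 i j hji]
      ring
    · intro i
      rw [tinv, diag_conj_apply, hu.1.2 i]
      linear_combination hd i
  · exact so_mul (so_mul (diag_SO hdet hd) hu.2) (tinv_SO hdet hd)

lemma conj_gE (hd : ∀ i, d i * d i.rev = 1) (a b : Fin (2*l)) (c : F)
    (hab : a ≠ b) (haRb : a ≠ b.rev) :
    Matrix.diagonal d * gE l a b c * tinv d = gE l a b (d a * d b.rev * c) := by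
  funext p q
  rw [tinv, diag_conj_apply, gE_apply, gE_apply]
  by_cases h1 : p = q
  · subst h1
    have e2 : ¬ (p = a ∧ p = b) := by rintro ⟨rfl, rfl⟩; exact hab rfl
    have e3 : ¬ (p = b.rev ∧ p = a.rev) := by
      rintro ⟨rfl, h⟩; exact hab (Fin.rev_inj.mp h.symm)
    rw [if_pos rfl]
    simp only [if_neg e2, if_neg e3]
    linear_combination hd p
  · simp only [if_neg h1]
    by_cases h2 : p = a ∧ q = b
    · have e3 : ¬ (p = b.rev ∧ q = a.rev) := by
        rintro ⟨hh, -⟩; exact haRb (h2.1.symm.trans hh)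
      simp only [if_pos h2, if_neg e3]
      rw [h2.1, h2.2]
      ring
    · simp only [if_neg h2]
      by_cases h3 : p = b.rev ∧ q = a.rev
      · simp only [if_pos h3]
        rw [h3.1, h3.2, Fin.rev_rev]
        ring
      · simp only [if_neg h3]
        ring

end torus
section psi
variable (ψ : AddChar F ℂ)

/-- the F-valued argument of soPsi -/
def argF (l : ℕ) (u : Matrix (Fin (2*l)) (Fin (2*l)) F) : F :=
  (∑ i ∈ Finset.range (l-2), ent u i (i+1))
      + (4 : F)⁻¹ * ent u (l-2) (l-1) - (2 : F)⁻¹ * ent u (l-2) l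

lemma soPsi_eq (l : ℕ) (u : Matrix (Fin (2*l)) (Fin (2*l)) F) :
    soPsi F ψ l u = ψ (argF l u) := rfl

lemma ent_eq {m : ℕ} (u : Matrix (Fin m) (Fin m) F) {i j : ℕ} (hi : i < m) (hj : j < m) :
    ent u i j = u ⟨i, hi⟩ ⟨j, hj⟩ := dif_pos ⟨hi, hj⟩

lemma arg_X (hl : 2 ≤ l) (i0 : ℕ) (hi0 : i0 < l - 2) (c : F)
    (u : Matrix (Fin (2*l)) (Fin (2*l)) F) (hu : u ∈ USO F l) :
    argF l (gE l ⟨i0, by omega⟩ ⟨i0+1, by omega⟩ c * u) = c + argF l u := by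
  have hi0lt : i0 < 2*l := by omega
  have hi1lt : i0+1 < 2*l := by omega
  have hl2 : l-2 < 2*l := by omega
  have hl1 : l-1 < 2*l := by omega
  have hll : l < 2*l := by omega
  have hrevb : ((⟨i0+1, hi1lt⟩ : Fin (2*l)).rev : ℕ) = 2*l - 2 - i0 := by
    rw [Fin.val_rev]; simp only [Fin.val_mk]; omega
  have hT1 : ∀ i ∈ Finset.range (l-2),
      ent (gE l ⟨i0, hi0lt⟩ ⟨i0+1, hi1lt⟩ c * u) i (i+1)
        = ent u i (i+1) + (if i = i0 then c else 0) := by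
    intro i hi
    rw [Finset.mem_range] at hi
    have h1 : i < 2*l := by omega
    have h2 : i+1 < 2*l := by omega
    rw [ent_eq _ h1 h2, ent_eq _ h1 h2, gE_mul_apply]
    have e3 : ¬ ((⟨i, h1⟩ : Fin (2*l)) = (⟨i0+1, hi1lt⟩ : Fin (2*l)).rev) := by
      intro h
      have := congrArg Fin.val h
      rw [hrevb] at this
      simp at this
      omega
    rw [if_neg e3, sub_zero]
    by_cases hii : i = i0
    · subst hii
      rw [if_pos rfl, if_pos (by rfl)]
      have hone : u ⟨i+1, hi1lt⟩ ⟨i+1, h2⟩ = 1 := hu.1.2 _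
      rw [hone, mul_one]
    · rw [if_neg (by simp [Fin.ext_iff]; omega), if_neg hii]
  have hT2 : ent (gE l ⟨i0, hi0lt⟩ ⟨i0+1, hi1lt⟩ c * u) (l-2) (l-1)
      = ent u (l-2) (l-1) := by
    rw [ent_eq _ hl2 hl1, ent_eq _ hl2 hl1, gE_mul_apply]
    rw [if_neg (by simp [Fin.ext_iff]; omega),
        if_neg (by intro h; have := congrArg Fin.val h; rw [hrevb] at this; simp at this; omega)]
    ring
  have hT3 : ent (gE l ⟨i0, hi0lt⟩ ⟨i0+1, hi1lt⟩ c * u) (l-2) l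
      = ent u (l-2) l := by
    rw [ent_eq _ hl2 hll, ent_eq _ hl2 hll, gE_mul_apply]
    rw [if_neg (by simp [Fin.ext_iff]; omega),
        if_neg (by intro h; have := congrArg Fin.val h; rw [hrevb] at this; simp at this; omega)]
    ring
  unfold argF
  rw [hT2, hT3, Finset.sum_congr rfl hT1, Finset.sum_add_distrib,
      Finset.sum_ite_eq' (Finset.range (l-2)) i0 (fun _ => c),
      if_pos (Finset.mem_range.mpr hi0)]
  ring

lemma arg_Xl (hl : 2 ≤ l) (h2 : (2:F) ≠ 0) (c : F)
    (u : Matrix (Fin (2*l)) (Fin (2*l)) F) (hu : u ∈ USO F l) :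
    argF l (gE l ⟨l-2, by omega⟩ ⟨l-1, by omega⟩ c * u) = (4:F)⁻¹ * c + argF l u := by
  have hl2 : l-2 < 2*l := by omega
  have hl1 : l-1 < 2*l := by omega
  have hll : l < 2*l := by omega
  have hrevb : ((⟨l-1, hl1⟩ : Fin (2*l)).rev : ℕ) = l := by
    rw [Fin.val_rev]; simp only [Fin.val_mk]; omega
  have hT1 : ∀ i ∈ Finset.range (l-2),
      ent (gE l ⟨l-2, hl2⟩ ⟨l-1, hl1⟩ c * u) i (i+1) = ent u i (i+1) := by
    intro i hi
    rw [Finset.mem_range] at hi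
    have h1 : i < 2*l := by omega
    have hi1 : i+1 < 2*l := by omega
    rw [ent_eq _ h1 hi1, ent_eq _ h1 hi1, gE_mul_apply]
    rw [if_neg (by simp [Fin.ext_iff]; omega),
        if_neg (by intro h; have := congrArg Fin.val h; rw [hrevb] at this; simp at this; omega)]
    ring
  have hT2 : ent (gE l ⟨l-2, hl2⟩ ⟨l-1, hl1⟩ c * u) (l-2) (l-1)
      = ent u (l-2) (l-1) + c := by
    rw [ent_eq _ hl2 hl1, ent_eq _ hl2 hl1, gE_mul_apply]
    rw [if_pos rfl,
        if_neg (by intro h; have := congrArg Fin.val h; rw [hrevb] at this; simp at this; omega)]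
    rw [hu.1.2 ⟨l-1, hl1⟩, mul_one]
    ring
  have hT3 : ent (gE l ⟨l-2, hl2⟩ ⟨l-1, hl1⟩ c * u) (l-2) l = ent u (l-2) l := by
    rw [ent_eq _ hl2 hll, ent_eq _ hl2 hll, gE_mul_apply]
    rw [if_pos rfl,
        if_neg (by intro h; have := congrArg Fin.val h; rw [hrevb] at this; simp at this; omega)]
    have : u ⟨l-1, hl1⟩ ⟨l, hll⟩ = 0 := mid_zero hl h2 hu
    rw [this, mul_zero]
    ring
  unfold argF
  rw [hT2, hT3, Finset.sum_congr rfl hT1]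
  ring

lemma arg_Y (hl : 2 ≤ l) (c : F)
    (u : Matrix (Fin (2*l)) (Fin (2*l)) F) (hu : u ∈ USO F l) :
    argF l (gE l ⟨l-2, by omega⟩ ⟨l, by omega⟩ c * u) = -((2:F)⁻¹ * c) + argF l u := by
  have hl2 : l-2 < 2*l := by omega
  have hl1 : l-1 < 2*l := by omega
  have hll : l < 2*l := by omega
  have hrevb : ((⟨l, hll⟩ : Fin (2*l)).rev : ℕ) = l-1 := by
    rw [Fin.val_rev]; simp only [Fin.val_mk]; omega
  have hT1 : ∀ i ∈ Finset.range (l-2),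
      ent (gE l ⟨l-2, hl2⟩ ⟨l, hll⟩ c * u) i (i+1) = ent u i (i+1) := by
    intro i hi
    rw [Finset.mem_range] at hi
    have h1 : i < 2*l := by omega
    have hi1 : i+1 < 2*l := by omega
    rw [ent_eq _ h1 hi1, ent_eq _ h1 hi1, gE_mul_apply]
    rw [if_neg (by simp [Fin.ext_iff]; omega),
        if_neg (by intro h; have := congrArg Fin.val h; rw [hrevb] at this; simp at this; omega)]
    ring
  have hT2 : ent (gE l ⟨l-2, hl2⟩ ⟨l, hll⟩ c * u) (l-2) (l-1)
      = ent u (l-2) (l-1) := by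
    rw [ent_eq _ hl2 hl1, ent_eq _ hl2 hl1, gE_mul_apply]
    rw [if_pos rfl,
        if_neg (by intro h; have := congrArg Fin.val h; rw [hrevb] at this; simp at this; omega)]
    rw [hu.1.1 ⟨l, hll⟩ ⟨l-1, hl1⟩ (by simp; omega), mul_zero]
    ring
  have hT3 : ent (gE l ⟨l-2, hl2⟩ ⟨l, hll⟩ c * u) (l-2) l
      = ent u (l-2) l + c := by
    rw [ent_eq _ hl2 hll, ent_eq _ hl2 hll, gE_mul_apply]
    rw [if_pos rfl,
        if_neg (by intro h; have := congrArg Fin.val h; rw [hrevb] at this; simp at this; omega)]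
    rw [hu.1.2 ⟨l, hll⟩, mul_one]
    ring
  unfold argF
  rw [hT2, hT3, Finset.sum_congr rfl hT1]
  ring

end psi
section master
variable [Fintype F]
variable (ψ : AddChar F ℂ)

lemma psi_ne_zero (x : F) : ψ x ≠ 0 := by
  intro h
  have h1 : ψ x * ψ (-x) = 1 := by
    rw [← AddChar.map_add_eq_mul, add_neg_cancel, AddChar.map_zero_eq_one]
  rw [h, zero_mul] at h1
  exact zero_ne_one h1

lemma master {d : Fin (2*l) → F} (hd : ∀ i, d i * d i.rev = 1)
    (hdet : (Matrix.diagonal d).det = 1) (hψ : ψ ≠ 1)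
    (a b : Fin (2*l)) (hab : a ≠ b) (haRb : a ≠ b.rev) (hlt : (a:ℕ) < (b:ℕ))
    (k : F) (hk : k ≠ 0)
    (hP1 : ∀ (c : F) (u : Matrix (Fin (2*l)) (Fin (2*l)) F), u ∈ USO F l →
      soPsi F ψ l (gE l a b c * u) = ψ (k * c) * soPsi F ψ l u)
    (hS : (∑ u : Matrix (Fin (2*l)) (Fin (2*l)) F,
        if u ∈ USO F l then
          (soPsi F ψ l u)⁻¹ * soPsi F ψ l (Matrix.diagonal d * u * tinv d)
        else 0) ≠ 0) :
    d a * d b.rev = 1 := by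
  set S := (∑ u : Matrix (Fin (2*l)) (Fin (2*l)) F,
        if u ∈ USO F l then
          (soPsi F ψ l u)⁻¹ * soPsi F ψ l (Matrix.diagonal d * u * tinv d)
        else 0) with hSdef
  by_contra hne
  obtain ⟨x, hx⟩ := AddChar.ne_one_iff.mp hψ
  set D := d a * d b.rev with hD
  have hD1 : k * (D - 1) ≠ 0 := mul_ne_zero hk (sub_ne_zero.mpr hne)
  set c := (k * (D - 1))⁻¹ * x with hc
  have hkey : -(k * c) + k * (D * c) = x := by
    have h1 : -(k*c) + k*(D*c) = (k*(D-1)) * c := by ring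
    rw [h1, hc, ← mul_assoc, mul_inv_cancel₀ hD1, one_mul]
  set g := gE l a b c with hg
  set g' := gE l a b (-c) with hg'
  have hgg' : g * g' = 1 := gE_mul_neg a b c hab haRb
  have hg'g : g' * g = 1 := by
    have := gE_mul_neg a b (-c) hab haRb
    rwa [neg_neg] at this
  have hgU : g ∈ USO F l := ⟨gE_unip a b c hab hlt, gE_SO a b c hab haRb hlt⟩
  have hg'U : g' ∈ USO F l := ⟨gE_unip a b (-c) hab hlt, gE_SO a b (-c) hab haRb hlt⟩
  have hbij : Function.Bijective (fun u : Matrix (Fin (2*l)) (Fin (2*l)) F => g * u) := by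
    apply Function.bijective_iff_has_inverse.mpr
    refine ⟨fun u => g' * u, fun u => ?_, fun u => ?_⟩
    · show g' * (g * u) = u
      rw [← mul_assoc, hg'g, one_mul]
    · show g * (g' * u) = u
      rw [← mul_assoc, hgg', one_mul]
  have hre : S = ∑ u : Matrix (Fin (2*l)) (Fin (2*l)) F,
      (if g * u ∈ USO F l then
        (soPsi F ψ l (g * u))⁻¹ * soPsi F ψ l (Matrix.diagonal d * (g * u) * tinv d)
      else 0) := by
    rw [hSdef]
    exact (Fintype.sum_bijective (fun u => g * u) hbij _ _ (fun u => rfl)).symm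
  have hterm : ∀ u : Matrix (Fin (2*l)) (Fin (2*l)) F,
      (if g * u ∈ USO F l then
        (soPsi F ψ l (g * u))⁻¹ * soPsi F ψ l (Matrix.diagonal d * (g * u) * tinv d)
      else 0)
      = ψ x * (if u ∈ USO F l then
          (soPsi F ψ l u)⁻¹ * soPsi F ψ l (Matrix.diagonal d * u * tinv d) else 0) := by
    intro u
    by_cases hu : u ∈ USO F l
    · have h1 : g * u ∈ USO F l := uso_mul hgU hu
      rw [if_pos h1, if_pos hu]
      have hconj : Matrix.diagonal d * (g * u) * tinv d
          = gE l a b (D * c) * (Matrix.diagonal d * u * tinv d) := by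
        have hBA : tinv d * Matrix.diagonal d = 1 := tinv_mul_diag hd
        have e1 : (Matrix.diagonal d * g * tinv d) * (Matrix.diagonal d * u * tinv d)
            = Matrix.diagonal d * (g * u) * tinv d := by
          calc (Matrix.diagonal d * g * tinv d) * (Matrix.diagonal d * u * tinv d)
              = Matrix.diagonal d * g * ((tinv d * Matrix.diagonal d) * (u * tinv d)) := by
                noncomm_ring
            _ = Matrix.diagonal d * g * (u * tinv d) := by rw [hBA, one_mul]
            _ = Matrix.diagonal d * (g * u) * tinv d := by noncomm_ring
        rw [← e1, conj_gE hd a b c hab haRb, ← hD]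
      rw [hconj, hP1 c u hu, hP1 (D * c) _ (conj_USO hd hdet hu), mul_inv]
      rw [show ((ψ (k * c))⁻¹ * (soPsi F ψ l u)⁻¹) *
          (ψ (k * (D * c)) * soPsi F ψ l (Matrix.diagonal d * u * tinv d))
          = ((ψ (k * c))⁻¹ * ψ (k * (D * c))) *
            ((soPsi F ψ l u)⁻¹ * soPsi F ψ l (Matrix.diagonal d * u * tinv d)) from by ring]
      rw [← AddChar.map_neg_eq_inv, ← AddChar.map_add_eq_mul, hkey]
    · have h1 : g * u ∉ USO F l := by
        intro hh
        apply hu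
        have := uso_mul hg'U hh
        rwa [← mul_assoc, hg'g, one_mul] at this
      rw [if_neg h1, if_neg hu, mul_zero]
  have hfinal : S = ψ x * S := by
    conv_lhs => rw [hre]
    rw [Finset.sum_congr rfl (fun u _ => hterm u), ← Finset.mul_sum, hSdef]
  have : (ψ x - 1) * S = 0 := by linear_combination -hfinal
  rcases mul_eq_zero.mp this with h | h
  · exact hx (by linear_combination h)
  · exact hS h

end master
section main
variable [Fintype F]

theorem main_aux (hF : ringChar F ≠ 2)
    (ψ : AddChar F ℂ) (hψ : ψ ≠ 1)
    (hl : 2 ≤ l)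
    (π : FRep F (2*l) (SOset F (2*l)))
    (B : Matrix (Fin (2*l)) (Fin (2*l)) F → ℂ) (hB : IsBesselOf F ψ l π.ρ B)
    (t : Matrix (Fin (2*l)) (Fin (2*l)) F) (ht : t ∈ TSO F l) (hnz : B t ≠ 0) :
    t = 1 ∨ t = -1 := by
  -- character values
  have h2 : (2:F) ≠ 0 := by
    intro h
    have hdvd : ringChar F ∣ 2 := (CharP.cast_eq_zero_iff F (ringChar F) 2).mp (by exact_mod_cast h)
    rcases (Nat.dvd_prime Nat.prime_two).mp hdvd with h1 | h1
    · have : ((1:ℕ):F) = 0 := (CharP.cast_eq_zero_iff F (ringChar F) 1).mpr (by rw [h1])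
      rw [Nat.cast_one] at this
      exact one_ne_zero this
    · exact hF h1
  have h4 : (4:F) ≠ 0 := by
    have e : (4:F) = 2 * 2 := by norm_num
    rw [e]; exact mul_ne_zero h2 h2
  -- torus data
  obtain ⟨Γ, hWh, v, v₀, hv₀, hΓv₀, hBdef⟩ := hB
  set d : Fin (2*l) → F := fun i => t i i with hddef
  have ht_eq : t = Matrix.diagonal d := by
    funext i j
    by_cases h : i = j
    · subst h; rw [Matrix.diagonal_apply_eq]
    · rw [Matrix.diagonal_apply_ne _ h]; exact ht.1.1 i j h
  have htSO : t ∈ SOset F (2*l) := ht.2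
  have hdet : (Matrix.diagonal d).det = 1 := by rw [← ht_eq]; exact htSO.1
  have hd : ∀ i, d i * d i.rev = 1 := by
    intro i
    have hJ := htSO.2
    rw [ht_eq, Matrix.diagonal_transpose] at hJ
    have hent := congrFun (congrFun hJ i) i.rev
    rw [Matrix.mul_diagonal, Matrix.diagonal_mul, matJ_apply_eq, if_pos rfl] at hent
    linear_combination hent
  have ht'SO : tinv d ∈ SOset F (2*l) := tinv_SO hdet hd
  have ht't : tinv d * Matrix.diagonal d = 1 := tinv_mul_diag hd
  -- numerator nonzero
  have hnum : Γ (π.ρ t v₀) ≠ 0 := by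
    intro h
    apply hnz
    rw [hBdef t, h, zero_div]
  -- the character sum
  set S : ℂ := (∑ u : Matrix (Fin (2*l)) (Fin (2*l)) F,
      if u ∈ USO F l then
        (soPsi F ψ l u)⁻¹ * soPsi F ψ l (Matrix.diagonal d * u * tinv d)
      else 0) with hSdef
  -- expansion of the numerator
  have hexp : Γ (π.ρ t v₀) = ((USO F l).ncard : ℂ)⁻¹ * (S * Γ (π.ρ t v)) := by
    have e1 : Γ (π.ρ t v₀) = ((USO F l).ncard : ℂ)⁻¹ *
        ∑ u : Matrix (Fin (2*l)) (Fin (2*l)) F,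
          (if u ∈ USO F l then (soPsi F ψ l u)⁻¹ * Γ (π.ρ t (π.ρ u v)) else 0) := by
      rw [hv₀, LinearMap.map_smul, LinearMap.map_smul, map_sum, map_sum, smul_eq_mul]
      congr 1
      apply Finset.sum_congr rfl
      intro u _
      rw [apply_ite (π.ρ t), map_zero, apply_ite Γ, map_zero, LinearMap.map_smul, LinearMap.map_smul, smul_eq_mul]
    rw [e1]
    congr 1
    rw [hSdef, Finset.sum_mul]
    apply Finset.sum_congr rfl
    intro u _
    by_cases hu : u ∈ USO F l
    · rw [if_pos hu, if_pos hu]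
      have hρ1 : π.ρ (t * u) v = π.ρ t (π.ρ u v) := by
        rw [π.map_mul t htSO u hu.2]; rfl
      have hmm : t * u = (Matrix.diagonal d * u * tinv d) * t := by
        rw [ht_eq]
        calc Matrix.diagonal d * u = Matrix.diagonal d * u * 1 := by rw [mul_one]
          _ = Matrix.diagonal d * u * (tinv d * Matrix.diagonal d) := by rw [ht't]
          _ = (Matrix.diagonal d * u * tinv d) * Matrix.diagonal d := by noncomm_ring
      have hconjUSO : Matrix.diagonal d * u * tinv d ∈ USO F l := conj_USO hd hdet hu
      have hρ2 : π.ρ (t * u) v = π.ρ (Matrix.diagonal d * u * tinv d) (π.ρ t v) := by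
        rw [hmm, π.map_mul _ hconjUSO.2 t htSO]; rfl
      rw [← hρ1, hρ2, hWh.2 _ hconjUSO (π.ρ t v)]
      ring
    · rw [if_neg hu, if_neg hu, zero_mul]

  have hSne : S ≠ 0 := by
    intro h0
    apply hnum
    rw [hexp, h0, zero_mul, mul_zero]
  -- applying the master lemma to the three families of root elements
  have hstep : ∀ i0 : ℕ, ∀ _ : i0 < l - 1,
      d ⟨i0, by omega⟩ = d ⟨i0+1, by omega⟩ := by
    intro i0 hi0
    have hi0lt : i0 < 2*l := by omega
    have hi1lt : i0+1 < 2*l := by omega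
    set a : Fin (2*l) := ⟨i0, hi0lt⟩
    set b : Fin (2*l) := ⟨i0+1, hi1lt⟩
    have hab : a ≠ b := by
      intro h; have := congrArg Fin.val h; simp [a, b] at this
    have haRb : a ≠ b.rev := by
      intro h; have := congrArg Fin.val h; rw [Fin.val_rev] at this; simp [a, b] at this; omega
    have hlt : (a:ℕ) < (b:ℕ) := by simp [a, b]
    have hmaster : d a * d b.rev = 1 := by
      rcases Nat.lt_or_ge i0 (l-2) with hcase | hcase
      · refine master ψ hd hdet hψ a b hab haRb hlt 1 one_ne_zero ?_ hSne
        intro c u hu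
        rw [one_mul, soPsi_eq, soPsi_eq, arg_X hl i0 hcase c u hu, AddChar.map_add_eq_mul]
      · have hi0eq : i0 = l - 2 := by omega
        subst hi0eq
        have hbeq : b = ⟨l-1, by omega⟩ := by
          rw [Fin.ext_iff]; simp [b]; omega
        rw [hbeq] at hab haRb hlt ⊢
        refine master ψ hd hdet hψ a _ hab haRb hlt ((4:F)⁻¹) (inv_ne_zero h4) ?_ hSne
        intro c u hu
        rw [soPsi_eq, soPsi_eq, arg_Xl hl h2 c u hu, AddChar.map_add_eq_mul]
    have hcancel := hd b
    have hne : d b.rev ≠ 0 := right_ne_zero_of_mul_eq_one hcancel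
    exact mul_right_cancel₀ hne (hmaster.trans hcancel.symm)
  have hY : d ⟨l-2, by omega⟩ * d ⟨l-1, by omega⟩ = 1 := by
    have hl2 : l-2 < 2*l := by omega
    have hll : l < 2*l := by omega
    set a : Fin (2*l) := ⟨l-2, hl2⟩
    set b : Fin (2*l) := ⟨l, hll⟩
    have hab : a ≠ b := by
      intro h; have := congrArg Fin.val h; simp [a, b] at this; omega
    have haRb : a ≠ b.rev := by
      intro h; have := congrArg Fin.val h; rw [Fin.val_rev] at this; simp [a, b] at this; omega
    have hlt : (a:ℕ) < (b:ℕ) := by simp [a, b]; omega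
    have hk : -(2:F)⁻¹ ≠ 0 := neg_ne_zero.mpr (inv_ne_zero h2)
    have hmaster : d a * d b.rev = 1 := by
      refine master ψ hd hdet hψ a b hab haRb hlt (-(2:F)⁻¹) hk ?_ hSne
      intro c u hu
      rw [soPsi_eq, soPsi_eq, arg_Y hl c u hu, AddChar.map_add_eq_mul, neg_mul]
    have hbrev : b.rev = ⟨l-1, by omega⟩ := by
      rw [Fin.ext_iff, Fin.val_rev]; simp [b]; omega
    rw [hbrev] at hmaster
    exact hmaster
  -- all low entries equal ε
  set ε : F := d ⟨l-1, by omega⟩ with hεdef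
  have heps2 : ε * ε = 1 := by
    have h1 : d ⟨l-2, by omega⟩ = ε := by
      have := hstep (l-2) (by omega)
      rw [this]
      congr 1
      rw [Fin.ext_iff]; simp; omega
    rw [← h1, ← hY]
    congr 1
  have hepsne : ε ≠ 0 := left_ne_zero_of_mul_eq_one heps2
  have hchain : ∀ n : ℕ, n ≤ l-1 → d ⟨l-1-n, by omega⟩ = ε := by
    intro n
    induction n with
    | zero =>
      intro _
      have e : (⟨l-1-0, by omega⟩ : Fin (2*l)) = ⟨l-1, by omega⟩ := by simp
      rw [e, hεdef]
    | succ n ih =>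
      intro hn
      have h1 : l-1-(n+1) < l-1 := by omega
      have e := hstep (l-1-(n+1)) h1
      have e2 : (⟨l-1-(n+1)+1, by omega⟩ : Fin (2*l)) = ⟨l-1-n, by omega⟩ := by
        rw [Fin.ext_iff]; simp; omega
      rw [e, e2, ih (by omega)]
  have hlow : ∀ i : Fin (2*l), (i:ℕ) < l → d i = ε := by
    intro i hi
    have := hchain (l-1-(i:ℕ)) (by omega)
    have e : (⟨l-1-(l-1-(i:ℕ)), by omega⟩ : Fin (2*l)) = i := by
      rw [Fin.ext_iff]; simp; omega
    rwa [e] at this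
  have hall : ∀ i : Fin (2*l), d i = ε := by
    intro i
    rcases Nat.lt_or_ge (i:ℕ) l with h | h
    · exact hlow i h
    · have hrevlow : d i.rev = ε := by
        apply hlow
        rw [Fin.val_rev]; have := i.isLt; omega
      have := hd i
      rw [hrevlow] at this
      have h2' : d i * ε = ε * ε := this.trans heps2.symm
      exact mul_right_cancel₀ hepsne h2'
  have hdfun : d = fun _ => ε := funext hall
  rcases mul_self_eq_one_iff.mp heps2 with h | h
  · left
    rw [ht_eq, hdfun, h, Matrix.diagonal_one]
  · right
    rw [ht_eq, hdfun, h]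
    rw [show (fun _ : Fin (2*l) => (-1:F)) = (fun i : Fin (2*l) => -(1:F)) from rfl]
    rw [← Matrix.diagonal_neg, Matrix.diagonal_one]

end main

end dev

end SOConverse

open SOConverse in
/-- If the normalized Bessel function is nonzero at a torus element `t`, then `t` is
central, i.e. `t = ±I_{2l}`. -/
theorem bessel_torus_support_central
    (F : Type) [Field F] [Fintype F] (hF : ringChar F ≠ 2)
    (ψ : AddChar F ℂ) (hψ : ψ ≠ 1)
    (l : ℕ) (hl : 2 ≤ l)
    (π : FRep F (2*l) (SOset F (2*l)))
    (hπirr : π.Irreducible) (hπgen : GenericOf F ψ l π.ρ)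
    (B : Matrix (Fin (2*l)) (Fin (2*l)) F → ℂ) (hB : IsBesselOf F ψ l π.ρ B)
    (t : Matrix (Fin (2*l)) (Fin (2*l)) F) (ht : t ∈ TSO F l) (hnz : B t ≠ 0) :
    t = 1 ∨ t = -1 :=
  SOConverse.main_aux hF ψ hψ hl π B hB t ht hnz
end
end

section
/- Let w ∈ B_{l−1}(SO_{2l}) and w′ ∈ W(GL_l) with w = t_l(w′)·w̃_l. Then w′ = [[0, w″],[1, 0]] (i.e. the first column of w′ has its 1 in the last row and the remaining columns form w″ in the first l−1 rows) for some w″ ∈ W(GL_{l−1}). Conversely, if w ∈ B(SO_{2l}) satisfies w = t_l(w′)·w̃_l with w′ = [[0, w″],[1, 0]] for some w″ ∈ W(GL_{l−1}), then w ∈ B_{l−1}(SO_{2l}). -/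
/-!
Common definitions for formalizing "A Converse Theorem for Split SO(2l) over Finite Fields"
(Hazeltine–Liu).  We work with the split special orthogonal groups realized as sets of
matrices over a finite field `F` of odd characteristic, and with complex representations
encoded as functions from matrices to linear endomorphisms that are multiplicative on the
relevant matrix group.
-/

open scoped Classical BigOperators

noncomputable section

section Helpers
open SOConverse

variable {F : Type} [Field F]

/-- nat-level swap of `l-1` and `l`. -/
def BPswap (l i : ℕ) : ℕ := if i = l-1 then l else if i = l then l-1 else i

/-- nat-level column function of `wtildel`: column `j` of `wtildel` has its 1 in row `BPf l j`. -/
def BPf (l j : ℕ) : ℕ :=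
  if l % 2 = 0 then (if j < l then j + l else j - l)
  else if j = 0 then l else if j ≤ l-2 then j + l else if j = l-1 then 0
       else if j = l then 2*l-1 else if j ≤ 2*l-2 then j - l else l-1

lemma BPswap_lt {l a : ℕ} (h : a < 2*l) : BPswap l a < 2*l := by
  unfold BPswap; split_ifs <;> omega

lemma BPf_lt {l j : ℕ} (h : j < 2*l) : BPf l j < 2*l := by
  unfold BPf; split_ifs <;> omega

lemma BP_ent {m : ℕ} (A : Matrix (Fin m) (Fin m) F) (i j : ℕ) (h1 : i < m) (h2 : j < m) :
    ent A i j = A ⟨i, h1⟩ ⟨j, h2⟩ := dif_pos ⟨h1, h2⟩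

/-- right multiplication by a column-function 0-1 matrix -/
lemma BP_mul_col {m : ℕ} (A P : Matrix (Fin m) (Fin m) F) (f : ℕ → ℕ)
    (hf : ∀ j : Fin m, f (j : ℕ) < m)
    (hP : ∀ k j : Fin m, P k j = if (k : ℕ) = f (j : ℕ) then 1 else 0) (i j : Fin m) :
    (A * P) i j = A i ⟨f (j : ℕ), hf j⟩ := by
  rw [Matrix.mul_apply, Finset.sum_eq_single (⟨f (j : ℕ), hf j⟩ : Fin m)]
  · rw [hP]; simp
  · intro k _ hk
    rw [hP, if_neg, mul_zero]
    intro h; exact hk (Fin.ext h)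
  · intro h; exact absurd (Finset.mem_univ _) h

/-- left multiplication by a row-function 0-1 matrix -/
lemma BP_mul_row {m : ℕ} (P A : Matrix (Fin m) (Fin m) F) (g : ℕ → ℕ)
    (hg : ∀ i : Fin m, g (i : ℕ) < m)
    (hP : ∀ i k : Fin m, P i k = if (k : ℕ) = g (i : ℕ) then 1 else 0) (i j : Fin m) :
    (P * A) i j = A ⟨g (i : ℕ), hg i⟩ j := by
  rw [Matrix.mul_apply, Finset.sum_eq_single (⟨g (i : ℕ), hg i⟩ : Fin m)]
  · rw [hP]; simp
  · intro k _ hk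
    rw [hP, if_neg, zero_mul]
    intro h; exact hk (Fin.ext h)
  · intro h; exact absurd (Finset.mem_univ _) h

lemma BP_cmat_row (l : ℕ) (hl : 2 ≤ l) (i k : Fin (2*l)) :
    cmat F l i k = if (k : ℕ) = BPswap l (i : ℕ) then 1 else 0 := by
  have hi := i.isLt; have hk := k.isLt
  unfold cmat BPswap
  simp only [Matrix.of_apply, Fin.ext_iff]
  split_ifs <;> first | rfl | omega

lemma BP_cmat_col (l : ℕ) (hl : 2 ≤ l) (k j : Fin (2*l)) :
    cmat F l k j = if (k : ℕ) = BPswap l (j : ℕ) then 1 else 0 := by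
  have hj := j.isLt; have hk := k.isLt
  unfold cmat BPswap
  simp only [Matrix.of_apply, Fin.ext_iff]
  split_ifs <;> first | rfl | omega

lemma BP_matJ_row {m : ℕ} (i k : Fin m) :
    matJ F m i k = if (k : ℕ) = m - 1 - (i : ℕ) then 1 else 0 := by
  have hi := i.isLt; have hk := k.isLt
  unfold matJ
  simp only [Matrix.of_apply]
  split_ifs <;> first | rfl | omega

lemma BP_matJ_col {m : ℕ} (k j : Fin m) :
    matJ F m k j = if (k : ℕ) = m - 1 - (j : ℕ) then 1 else 0 := by
  have hj := j.isLt; have hk := k.isLt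
  unfold matJ
  simp only [Matrix.of_apply]
  split_ifs <;> first | rfl | omega

end Helpers

section Helpers2
open SOConverse

variable {F : Type} [Field F]

set_option maxHeartbeats 2000000 in
lemma BP_wtildel_col (l : ℕ) (hl : 2 ≤ l) (k j : Fin (2*l)) :
    wtildel F l k j = if (k : ℕ) = BPf l (j : ℕ) then 1 else 0 := by
  have hk := k.isLt; have hj := j.isLt
  unfold wtildel
  by_cases hpar : l % 2 = 0
  · rw [if_pos hpar]
    unfold wtildelp
    rw [if_pos hpar]
    have hF : BPf l (j : ℕ) = if (j : ℕ) < l then (j : ℕ) + l else (j : ℕ) - l := by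
      unfold BPf; rw [if_pos hpar]
    rw [hF]
    simp only [Matrix.of_apply]
    split_ifs <;> first | rfl | omega
  · rw [if_neg hpar]
    rw [BP_mul_col _ _ (BPswap l) (fun a => BPswap_lt a.isLt)
      (fun a b => BP_cmat_col l hl a b)]
    rw [BP_mul_row _ _ (BPswap l) (fun a => BPswap_lt a.isLt)
      (fun a b => BP_cmat_row l hl a b)]
    have hF : BPf l (j : ℕ) = if (j:ℕ) = 0 then l else if (j:ℕ) ≤ l-2 then (j:ℕ) + l
        else if (j:ℕ) = l-1 then 0 else if (j:ℕ) = l then 2*l-1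
        else if (j:ℕ) ≤ 2*l-2 then (j:ℕ) - l else l-1 := by
      unfold BPf; rw [if_neg hpar]
    rw [hF]
    unfold wtildelp
    rw [if_neg hpar]
    simp only [Matrix.of_apply]
    unfold BPswap
    split_ifs <;> first | rfl | omega

lemma BP_perm_mul_transpose {m : ℕ} (A : Matrix (Fin m) (Fin m) F)
    (hA : IsPermMatrix A) : A * A.transpose = 1 := by
  ext i j
  rw [Matrix.mul_apply]
  obtain ⟨k₀, hk₀, huniq⟩ := hA.2.1 i
  rw [Finset.sum_eq_single k₀]
  · rw [Matrix.transpose_apply, hk₀, one_mul]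
    by_cases hij : i = j
    · subst hij; rw [hk₀, Matrix.one_apply_eq]
    · rw [Matrix.one_apply_ne hij]
      rcases hA.1 j k₀ with h | h
      · exact h
      · exfalso
        obtain ⟨r, hr, hruniq⟩ := hA.2.2 k₀
        exact hij ((hruniq i hk₀).trans (hruniq j h).symm)
  · intro k _ hk
    rcases hA.1 i k with h | h
    · rw [h, zero_mul]
    · exact absurd (huniq k h) hk
  · intro h; exact absurd (Finset.mem_univ _) h

lemma BP_perm_invT {m : ℕ} (A : Matrix (Fin m) (Fin m) F)
    (hA : IsPermMatrix A) : (A⁻¹).transpose = A := by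
  rw [Matrix.inv_eq_right_inv (BP_perm_mul_transpose A hA), Matrix.transpose_transpose]

lemma BP_astar_apply {m : ℕ} (A : Matrix (Fin m) (Fin m) F) (hA : IsPermMatrix A)
    (p q : Fin m) :
    astar A p q = A ⟨m-1-(p:ℕ), by have := p.isLt; omega⟩ ⟨m-1-(q:ℕ), by have := q.isLt; omega⟩ := by
  unfold astar
  rw [BP_perm_invT A hA]
  rw [BP_mul_col _ _ (fun a => m-1-a) (fun a => by have := a.isLt; show m-1-(a:ℕ) < m; omega)
    (fun a b => BP_matJ_col a b)]
  rw [BP_mul_row _ _ (fun a => m-1-a) (fun a => by have := a.isLt; show m-1-(a:ℕ) < m; omega)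
    (fun a b => BP_matJ_row a b)]

end Helpers2

section Helpers3
open SOConverse

variable {F : Type} [Field F]

lemma BP_tmat_top (l : ℕ) (x : Matrix (Fin l) (Fin l) F) (i j : Fin (2*l))
    (hi : (i:ℕ) < l) (hj : (j:ℕ) < l) :
    tmat F l l x i j = x ⟨(i:ℕ), hi⟩ ⟨(j:ℕ), hj⟩ := by
  unfold tmat
  simp only [Matrix.of_apply]
  rw [if_pos ⟨hi, hj⟩, BP_ent]

lemma BP_tmat_cross1 (l : ℕ) (x : Matrix (Fin l) (Fin l) F) (i j : Fin (2*l))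
    (hi : (i:ℕ) < l) (hj : l ≤ (j:ℕ)) :
    tmat F l l x i j = 0 := by
  unfold tmat
  simp only [Matrix.of_apply]
  rw [if_neg (by omega), if_neg (by omega),
    if_neg (fun h => absurd (congrArg Fin.val h) (by omega))]

lemma BP_tmat_cross2 (l : ℕ) (x : Matrix (Fin l) (Fin l) F) (i j : Fin (2*l))
    (hi : l ≤ (i:ℕ)) (hj : (j:ℕ) < l) :
    tmat F l l x i j = 0 := by
  unfold tmat
  simp only [Matrix.of_apply]
  rw [if_neg (by omega), if_neg (by omega),
    if_neg (fun h => absurd (congrArg Fin.val h) (by omega))]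

lemma BP_tmat_bot (l : ℕ) (hl : 2 ≤ l) (x : Matrix (Fin l) (Fin l) F)
    (hx : IsPermMatrix x) (i j : Fin (2*l)) (hi : l ≤ (i:ℕ)) (hj : l ≤ (j:ℕ)) :
    tmat F l l x i j
      = x ⟨2*l-1-(i:ℕ), by have := i.isLt; omega⟩ ⟨2*l-1-(j:ℕ), by have := j.isLt; omega⟩ := by
  have hi2 := i.isLt; have hj2 := j.isLt
  unfold tmat
  simp only [Matrix.of_apply]
  rw [if_neg (by omega), if_pos ⟨by omega, by omega⟩,
    BP_ent _ _ _ (show (i:ℕ) - (2*l-l) < l by omega) (show (j:ℕ) - (2*l-l) < l by omega),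
    BP_astar_apply _ hx]
  congr 1 <;> exact Fin.ext (by simp; omega)

lemma BP_corner_row_last (l : ℕ) (w'' : Matrix (Fin (l-1)) (Fin (l-1)) F)
    (a b : Fin l) (ha : (a:ℕ) = l-1) :
    cornerForm F l w'' a b = if (b:ℕ) = 0 then 1 else 0 := by
  unfold cornerForm
  simp only [Matrix.of_apply]
  rw [if_pos ha]

lemma BP_corner_col0 (l : ℕ) (w'' : Matrix (Fin (l-1)) (Fin (l-1)) F)
    (a b : Fin l) (hb : (b:ℕ) = 0) :
    cornerForm F l w'' a b = if (a:ℕ) = l-1 then 1 else 0 := by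
  unfold cornerForm
  simp only [Matrix.of_apply]
  by_cases ha : (a:ℕ) = l-1
  · rw [if_pos ha, if_pos hb, if_pos ha]
  · rw [if_neg ha, if_pos hb, if_neg ha]

lemma BP_corner_main (l : ℕ) (w'' : Matrix (Fin (l-1)) (Fin (l-1)) F)
    (a b : Fin l) (ha : (a:ℕ) ≠ l-1) (hb : (b:ℕ) ≠ 0) :
    cornerForm F l w'' a b
      = w'' ⟨(a:ℕ), by have := a.isLt; omega⟩ ⟨(b:ℕ)-1, by have := b.isLt; omega⟩ := by
  unfold cornerForm
  simp only [Matrix.of_apply]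
  rw [if_neg ha, if_neg hb, BP_ent]

end Helpers3

section Helpers4
open SOConverse

variable {F : Type} [Field F]

lemma BP_corner_perm (l : ℕ) (hl : 2 ≤ l) (w'' : Matrix (Fin (l-1)) (Fin (l-1)) F)
    (h : IsPermMatrix w'') : IsPermMatrix (cornerForm F l w'') := by
  refine ⟨?_, ?_, ?_⟩
  · intro a b
    by_cases ha : (a:ℕ) = l-1
    · rw [BP_corner_row_last _ _ _ _ ha]
      split_ifs
      · exact Or.inr rfl
      · exact Or.inl rfl
    · by_cases hb : (b:ℕ) = 0
      · rw [BP_corner_col0 _ _ _ _ hb, if_neg ha]; exact Or.inl rfl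
      · rw [BP_corner_main _ _ _ _ ha hb]; exact h.1 _ _
  · intro a
    by_cases ha : (a:ℕ) = l-1
    · refine ⟨⟨0, by omega⟩, ?_, ?_⟩
      · beta_reduce
        rw [BP_corner_col0 _ _ _ _ rfl, if_pos ha]
      · intro b hb1
        beta_reduce at hb1
        by_cases hb : (b:ℕ) = 0
        · exact Fin.ext (by simp only [Fin.val_mk]; exact hb)
        · rw [BP_corner_row_last _ _ _ _ ha, if_neg hb] at hb1
          exact absurd hb1 zero_ne_one
    · have ha' : (a:ℕ) < l-1 := by have := a.isLt; omega
      obtain ⟨b, hb, hbu⟩ := h.2.1 ⟨(a:ℕ), ha'⟩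
      refine ⟨⟨(b:ℕ)+1, by have := b.isLt; omega⟩, ?_, ?_⟩
      · beta_reduce
        rw [BP_corner_main _ _ _ _ ha (by simp)]
        convert hb using 2 <;> exact Fin.ext (by simp)
      · intro c hc1
        beta_reduce at hc1
        by_cases hc : (c:ℕ) = 0
        · rw [BP_corner_col0 _ _ _ _ hc, if_neg ha] at hc1
          exact absurd hc1 zero_ne_one
        · rw [BP_corner_main _ _ _ _ ha hc] at hc1
          have h2 := congrArg Fin.val (hbu _ hc1)
          simp only [Fin.val_mk] at h2
          exact Fin.ext (by simp only [Fin.val_mk]; omega)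
  · intro b
    by_cases hb : (b:ℕ) = 0
    · refine ⟨⟨l-1, by omega⟩, ?_, ?_⟩
      · beta_reduce
        rw [BP_corner_col0 _ _ _ _ hb, if_pos rfl]
      · intro a ha1
        beta_reduce at ha1
        by_cases ha : (a:ℕ) = l-1
        · exact Fin.ext (by simp only [Fin.val_mk]; exact ha)
        · rw [BP_corner_col0 _ _ _ _ hb, if_neg ha] at ha1
          exact absurd ha1 zero_ne_one
    · obtain ⟨a, ha, hau⟩ := h.2.2 ⟨(b:ℕ)-1, by have := b.isLt; omega⟩
      refine ⟨⟨(a:ℕ), by have := a.isLt; omega⟩, ?_, ?_⟩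
      · beta_reduce
        rw [BP_corner_main _ _ _ _ (by have := a.isLt; simp only [Fin.val_mk]; omega) hb]
        convert ha using 2 <;> exact Fin.ext (by simp)
      · intro c hc1
        beta_reduce at hc1
        by_cases hc : (c:ℕ) = l-1
        · rw [BP_corner_row_last _ _ _ _ hc, if_neg hb] at hc1
          exact absurd hc1 zero_ne_one
        · rw [BP_corner_main _ _ _ _ hc hb] at hc1
          have h2 := congrArg Fin.val (hau _ hc1)
          simp only [Fin.val_mk] at h2
          exact Fin.ext (by simp only [Fin.val_mk]; omega)

end Helpers4

section Helpers5
open SOConverse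

variable {F : Type} [Field F]

lemma BPf_lm1_even {l : ℕ} (hl : 2 ≤ l) (hpar : l % 2 = 0) : BPf l (l-1) = 2*l-1 := by
  unfold BPf; split_ifs <;> omega

lemma BPf_lm1_odd {l : ℕ} (hl : 2 ≤ l) (hpar : l % 2 ≠ 0) : BPf l (l-1) = 0 := by
  unfold BPf; split_ifs <;> omega

lemma BPf_l_even {l : ℕ} (hl : 2 ≤ l) (hpar : l % 2 = 0) : BPf l l = 0 := by
  unfold BPf; split_ifs <;> omega

lemma BPf_l_odd {l : ℕ} (hl : 2 ≤ l) (hpar : l % 2 ≠ 0) : BPf l l = 2*l-1 := by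
  unfold BPf; split_ifs <;> omega

lemma BPf_ne_special {l j : ℕ} (hl : 2 ≤ l) (hj : j < 2*l) (h1 : j ≠ l-1) (h2 : j ≠ l) :
    BPf l j ≠ 0 ∧ BPf l j ≠ 2*l-1 := by
  unfold BPf; split_ifs <;> omega

lemma BPf_shift {l j : ℕ} (hl : 2 ≤ l) (h1 : 1 ≤ j) (h2 : j ≤ l-1) : BPf l (l+j) = j := by
  unfold BPf; split_ifs <;> omega

lemma BP_T_rl1 (l : ℕ) (hl : 2 ≤ l) (w'' : Matrix (Fin (l-1)) (Fin (l-1)) F)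
    (a b : Fin (2*l)) (ha : (a:ℕ) = l-1) :
    tmat F l l (cornerForm F l w'') a b = if (b:ℕ) = 0 then 1 else 0 := by
  have hb := b.isLt
  by_cases h : (b:ℕ) < l
  · rw [BP_tmat_top _ _ _ _ (by omega) h,
      BP_corner_row_last _ _ _ _ (by simp only [Fin.val_mk]; exact ha)]
  · rw [BP_tmat_cross1 _ _ _ _ (by omega) (by omega), if_neg (by omega)]

lemma BP_T_rl (l : ℕ) (hl : 2 ≤ l) (w'' : Matrix (Fin (l-1)) (Fin (l-1)) F)
    (hC : IsPermMatrix (cornerForm F l w''))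
    (a b : Fin (2*l)) (ha : (a:ℕ) = l) :
    tmat F l l (cornerForm F l w'') a b = if (b:ℕ) = 2*l-1 then 1 else 0 := by
  have hb := b.isLt
  by_cases h : l ≤ (b:ℕ)
  · rw [BP_tmat_bot l hl _ hC _ _ (by omega) h,
      BP_corner_row_last _ _ _ _ (by simp only [Fin.val_mk]; omega)]
    simp only [Fin.val_mk]
    split_ifs <;> first | rfl | omega
  · rw [BP_tmat_cross2 _ _ _ _ (by omega) (by omega), if_neg (by omega)]

lemma BP_T_c0 (l : ℕ) (hl : 2 ≤ l) (w'' : Matrix (Fin (l-1)) (Fin (l-1)) F)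
    (a b : Fin (2*l)) (hb : (b:ℕ) = 0) :
    tmat F l l (cornerForm F l w'') a b = if (a:ℕ) = l-1 then 1 else 0 := by
  have ha2 := a.isLt
  by_cases h : (a:ℕ) < l
  · rw [BP_tmat_top _ _ _ _ h (by omega),
      BP_corner_col0 _ _ _ _ (by simp only [Fin.val_mk]; exact hb)]
  · rw [BP_tmat_cross2 _ _ _ _ (by omega) (by omega), if_neg (by omega)]

lemma BP_T_c2l (l : ℕ) (hl : 2 ≤ l) (w'' : Matrix (Fin (l-1)) (Fin (l-1)) F)
    (hC : IsPermMatrix (cornerForm F l w''))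
    (a b : Fin (2*l)) (hb : (b:ℕ) = 2*l-1) :
    tmat F l l (cornerForm F l w'') a b = if (a:ℕ) = l then 1 else 0 := by
  have ha2 := a.isLt
  by_cases h : l ≤ (a:ℕ)
  · rw [BP_tmat_bot l hl _ hC _ _ h (by omega),
      BP_corner_col0 _ _ _ _ (by simp only [Fin.val_mk]; omega)]
    simp only [Fin.val_mk]
    split_ifs <;> first | rfl | omega
  · rw [BP_tmat_cross1 _ _ _ _ (by omega) (by omega), if_neg (by omega)]

lemma BP_conj_core (l : ℕ) (hl : 2 ≤ l) (w'' : Matrix (Fin (l-1)) (Fin (l-1)) F)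
    (hC : IsPermMatrix (cornerForm F l w'')) (i j a b c : Fin (2*l))
    (ha : (a:ℕ) = BPswap l (i:ℕ)) (hb : (b:ℕ) = BPf l (BPswap l (j:ℕ)))
    (hc : (c:ℕ) = BPf l (j:ℕ)) :
    tmat F l l (cornerForm F l w'') a b = tmat F l l (cornerForm F l w'') i c := by
  have hi := i.isLt; have hj := j.isLt
  by_cases hj1 : (j:ℕ) = l-1
  · have e0 : BPswap l (j:ℕ) = l := by unfold BPswap; rw [if_pos hj1]
    by_cases hpar : l % 2 = 0
    · rw [BP_T_c0 l hl w'' a b (by rw [hb, e0]; exact BPf_l_even hl hpar),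
        BP_T_c2l l hl w'' hC i c (by rw [hc, hj1]; exact BPf_lm1_even hl hpar)]
      rw [ha]; unfold BPswap; split_ifs <;> first | rfl | omega
    · rw [BP_T_c2l l hl w'' hC a b (by rw [hb, e0]; exact BPf_l_odd hl hpar),
        BP_T_c0 l hl w'' i c (by rw [hc, hj1]; exact BPf_lm1_odd hl hpar)]
      rw [ha]; unfold BPswap; split_ifs <;> first | rfl | omega
  · by_cases hj2 : (j:ℕ) = l
    · have e0 : BPswap l (j:ℕ) = l-1 := by
        unfold BPswap; rw [if_neg (by omega), if_pos hj2]
      by_cases hpar : l % 2 = 0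
      · rw [BP_T_c2l l hl w'' hC a b (by rw [hb, e0]; exact BPf_lm1_even hl hpar),
          BP_T_c0 l hl w'' i c (by rw [hc, hj2]; exact BPf_l_even hl hpar)]
        rw [ha]; unfold BPswap; split_ifs <;> first | rfl | omega
      · rw [BP_T_c0 l hl w'' a b (by rw [hb, e0]; exact BPf_lm1_odd hl hpar),
          BP_T_c2l l hl w'' hC i c (by rw [hc, hj2]; exact BPf_l_odd hl hpar)]
        rw [ha]; unfold BPswap; split_ifs <;> first | rfl | omega
    · have e0 : BPswap l (j:ℕ) = (j:ℕ) := by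
        unfold BPswap; rw [if_neg hj1, if_neg hj2]
      have hne := BPf_ne_special (l := l) (j := (j:ℕ)) hl hj hj1 hj2
      by_cases hi1 : (i:ℕ) = l-1
      · rw [BP_T_rl l hl w'' hC a b (by rw [ha]; unfold BPswap; rw [if_pos hi1]),
          BP_T_rl1 l hl w'' i c hi1,
          if_neg (show ¬((b:ℕ) = 2*l-1) by rw [hb, e0]; exact hne.2),
          if_neg (show ¬((c:ℕ) = 0) by rw [hc]; exact hne.1)]
      · by_cases hi2 : (i:ℕ) = l
        · rw [BP_T_rl1 l hl w'' a b
              (by rw [ha]; unfold BPswap; rw [if_neg (by omega), if_pos hi2]),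
            BP_T_rl l hl w'' hC i c hi2,
            if_neg (show ¬((b:ℕ) = 0) by rw [hb, e0]; exact hne.1),
            if_neg (show ¬((c:ℕ) = 2*l-1) by rw [hc]; exact hne.2)]
        · have e1 : a = i := Fin.ext (by rw [ha]; unfold BPswap; rw [if_neg hi1, if_neg hi2])
          have e2 : b = c := Fin.ext (by rw [hb, hc, e0])
          rw [e1, e2]

lemma BP_conj (l : ℕ) (hl : 2 ≤ l) (w'' : Matrix (Fin (l-1)) (Fin (l-1)) F)
    (hC : IsPermMatrix (cornerForm F l w'')) :
    cmat F l * (tmat F l l (cornerForm F l w'') * wtildel F l) * cmat F l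
      = tmat F l l (cornerForm F l w'') * wtildel F l := by
  ext i j
  rw [BP_mul_col _ (cmat F l) (BPswap l) (fun a => BPswap_lt a.isLt) (BP_cmat_col l hl)]
  rw [BP_mul_row (cmat F l) _ (BPswap l) (fun a => BPswap_lt a.isLt) (BP_cmat_row l hl)]
  rw [BP_mul_col _ (wtildel F l) (BPf l) (fun a => BPf_lt a.isLt) (BP_wtildel_col l hl)]
  rw [BP_mul_col _ (wtildel F l) (BPf l) (fun a => BPf_lt a.isLt) (BP_wtildel_col l hl)]
  exact BP_conj_core l hl w'' hC i j _ _ _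
    (by simp only [Fin.val_mk]) (by simp only [Fin.val_mk]) (by simp only [Fin.val_mk])

end Helpers5

section Helpers6
open SOConverse

variable {F : Type} [Field F]

lemma BP_mat_congr {m : ℕ} (A : Matrix (Fin m) (Fin m) F) (a b a' b' : Fin m)
    (h1 : (a:ℕ) = (a':ℕ)) (h2 : (b:ℕ) = (b':ℕ)) : A a b = A a' b' := by
  rw [show a = a' from Fin.ext h1, show b = b' from Fin.ext h2]

lemma BP_dir1_core (l : ℕ) (hl : 2 ≤ l) (w' : Matrix (Fin l) (Fin l) F) (j0 : ℕ)
    (h1 : 1 ≤ j0) (h2 : j0 ≤ l-1) (a b i c : Fin (2*l))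
    (ha : (a:ℕ) = BPswap l (l-1)) (hb : (b:ℕ) = BPf l (BPswap l (l+j0)))
    (hi : (i:ℕ) = l-1) (hc : (c:ℕ) = BPf l (l+j0))
    (hstep : tmat F l l w' a b = tmat F l l w' i c) :
    w' ⟨l-1, by omega⟩ ⟨j0, by omega⟩ = 0 := by
  have eswap : BPswap l (l+j0) = l+j0 := by unfold BPswap; split_ifs <;> omega
  have ea : (a:ℕ) = l := by rw [ha]; unfold BPswap; split_ifs <;> omega
  have eb : (b:ℕ) = j0 := by rw [hb, eswap, BPf_shift hl h1 h2]
  have ec : (c:ℕ) = j0 := by rw [hc, BPf_shift hl h1 h2]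
  rw [BP_tmat_cross2 l w' a b (by omega) (by omega),
      BP_tmat_top l w' i c (by omega) (by omega)] at hstep
  exact (BP_mat_congr w' _ _ _ _ (by simp only [Fin.val_mk]; omega)
    (by simp only [Fin.val_mk]; omega)).trans hstep.symm

end Helpers6

open SOConverse in
/-- For `w ∈ B_{l-1}(SO_{2l})` with `w = t_l(w') w̃_l`, the permutation matrix `w'` has the
form `[[0, w''],[1, 0]]` with `w'' ∈ W(GL_{l-1})`; and conversely any `w` in the Bessel
support of this form lies in `B_{l-1}(SO_{2l})`. -/
theorem Bsetlm1_corner_form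
    (F : Type) [Field F] [Fintype F] (hF : ringChar F ≠ 2)
    (l : ℕ) (hl : 2 ≤ l) :
    (∀ (w : Matrix (Fin (2*l)) (Fin (2*l)) F) (w' : Matrix (Fin l) (Fin l) F),
        w ∈ Bsetlm1 F l → IsPermMatrix w' → w = tmat F l l w' * wtildel F l →
        ∃ w'' : Matrix (Fin (l-1)) (Fin (l-1)) F,
          IsPermMatrix w'' ∧ w' = cornerForm F l w'') ∧
    (∀ w : Matrix (Fin (2*l)) (Fin (2*l)) F, w ∈ BesselSupport F l →
        ∀ w'' : Matrix (Fin (l-1)) (Fin (l-1)) F, IsPermMatrix w'' →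
        w = tmat F l l (cornerForm F l w'') * wtildel F l → w ∈ Bsetlm1 F l) := by
  constructor
  · -- direction 1
    intro w w' hmem hperm hw
    obtain ⟨hBes, _, hcwc⟩ := hmem
    have hl1 : l - 1 < l := by omega
    have hkey : ∀ j0 : Fin l, 1 ≤ (j0:ℕ) → w' ⟨l-1, hl1⟩ j0 = 0 := by
      intro j0 hj0
      have hj0l := j0.isLt
      have hstep := congrFun (congrFun hcwc ⟨l-1, by omega⟩) ⟨l + (j0:ℕ), by omega⟩
      rw [hw] at hstep
      rw [BP_mul_col _ (cmat F l) (BPswap l) (fun a => BPswap_lt a.isLt)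
        (BP_cmat_col l hl)] at hstep
      rw [BP_mul_row (cmat F l) _ (BPswap l) (fun a => BPswap_lt a.isLt)
        (BP_cmat_row l hl)] at hstep
      rw [BP_mul_col _ (wtildel F l) (BPf l) (fun a => BPf_lt a.isLt)
        (BP_wtildel_col l hl)] at hstep
      rw [BP_mul_col _ (wtildel F l) (BPf l) (fun a => BPf_lt a.isLt)
        (BP_wtildel_col l hl)] at hstep
      exact BP_dir1_core l hl w' (j0:ℕ) hj0 (by omega) _ _ _ _
        (by simp only [Fin.val_mk]) (by simp only [Fin.val_mk])
        (by simp only [Fin.val_mk]) (by simp only [Fin.val_mk]) hstep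
    obtain ⟨k, hk1, hku⟩ := hperm.2.1 ⟨l-1, hl1⟩
    have hk0 : (k:ℕ) = 0 := by
      by_contra h
      have h0 := hkey k (by omega)
      rw [h0] at hk1
      exact zero_ne_one hk1
    have h10 : w' ⟨l-1, hl1⟩ ⟨0, by omega⟩ = 1 := by
      rw [show (⟨0, by omega⟩ : Fin l) = k from Fin.ext (by simp only [Fin.val_mk]; omega)]
      exact hk1
    obtain ⟨r, hr1, hru⟩ := hperm.2.2 ⟨0, by omega⟩
    obtain ⟨w2, hw2⟩ : ∃ w2 : Matrix (Fin (l-1)) (Fin (l-1)) F,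
        ∀ (a b : Fin (l-1)), w2 a b
          = w' ⟨(a:ℕ), by have := a.isLt; omega⟩ ⟨(b:ℕ)+1, by have := b.isLt; omega⟩ :=
      ⟨Matrix.of (fun a b => w' ⟨(a:ℕ), by have := a.isLt; omega⟩
        ⟨(b:ℕ)+1, by have := b.isLt; omega⟩), fun a b => rfl⟩
    have hperm2 : IsPermMatrix w2 := by
      refine ⟨?_, ?_, ?_⟩
      · intro a b
        rw [hw2]
        exact hperm.1 _ _
      · intro a
        obtain ⟨k2, hk21, hk2u⟩ := hperm.2.1 ⟨(a:ℕ), by have := a.isLt; omega⟩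
        have hk2ne : (k2:ℕ) ≠ 0 := by
          intro h0
          have h1' : w' ⟨(a:ℕ), by have := a.isLt; omega⟩ ⟨0, by omega⟩ = 1 := by
            rw [show (⟨0, by omega⟩ : Fin l) = k2 from
              Fin.ext (by simp only [Fin.val_mk]; omega)]
            exact hk21
          have e1 := hru _ h1'
          have e2 := hru _ h10
          have e3 := congrArg Fin.val (e1.trans e2.symm)
          simp only [Fin.val_mk] at e3
          have := a.isLt; omega
        refine ⟨⟨(k2:ℕ)-1, by have := k2.isLt; omega⟩, ?_, ?_⟩
        · beta_reduce
          rw [hw2]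
          exact (BP_mat_congr w' _ _ _ _ (by simp only [Fin.val_mk])
            (by simp only [Fin.val_mk]; omega)).trans hk21
        · intro b' hb'
          beta_reduce at hb'
          rw [hw2] at hb'
          have h2 := hk2u ⟨(b':ℕ)+1, by have := b'.isLt; omega⟩ hb'
          have h3 := congrArg Fin.val h2
          simp only [Fin.val_mk] at h3
          exact Fin.ext (by simp only [Fin.val_mk]; omega)
      · intro b
        obtain ⟨r2, hr21, hr2u⟩ := hperm.2.2 ⟨(b:ℕ)+1, by have := b.isLt; omega⟩
        have hr2ne : (r2:ℕ) ≠ l-1 := by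
          intro h0
          rw [show r2 = ⟨l-1, hl1⟩ from Fin.ext (by simp only [Fin.val_mk]; omega)] at hr21
          rw [hkey ⟨(b:ℕ)+1, by have := b.isLt; omega⟩
            (by simp only [Fin.val_mk]; omega)] at hr21
          exact zero_ne_one hr21
        refine ⟨⟨(r2:ℕ), by have := r2.isLt; have := b.isLt; omega⟩, ?_, ?_⟩
        · beta_reduce
          rw [hw2]
          exact (BP_mat_congr w' _ _ _ _ (by simp only [Fin.val_mk])
            (by simp only [Fin.val_mk])).trans hr21
        · intro a' ha'
          beta_reduce at ha'
          rw [hw2] at ha'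
          have h2 := hr2u ⟨(a':ℕ), by have := a'.isLt; omega⟩ ha'
          have h3 := congrArg Fin.val h2
          simp only [Fin.val_mk] at h3
          exact Fin.ext (by simp only [Fin.val_mk]; omega)
    refine ⟨w2, hperm2, ?_⟩
    ext i j
    by_cases hi : (i:ℕ) = l-1
    · rw [BP_corner_row_last _ _ _ _ hi]
      by_cases hj : (j:ℕ) = 0
      · rw [if_pos hj, show i = ⟨l-1, hl1⟩ from Fin.ext hi,
          show j = (⟨0, by omega⟩ : Fin l) from Fin.ext hj]
        exact h10
      · rw [if_neg hj, show i = ⟨l-1, hl1⟩ from Fin.ext hi]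
        exact hkey j (by omega)
    · by_cases hj : (j:ℕ) = 0
      · rw [BP_corner_col0 _ _ _ _ hj, if_neg hi]
        rcases hperm.1 i j with h0 | h1
        · exact h0
        · exfalso
          apply hi
          have h1' : w' i ⟨0, by omega⟩ = 1 := by
            rw [show (⟨0, by omega⟩ : Fin l) = j from
              Fin.ext (by simp only [Fin.val_mk]; omega)]
            exact h1
          have e1 := hru _ h1'
          have e2 := hru _ h10
          have e3 := congrArg Fin.val (e1.trans e2.symm)
          simp only [Fin.val_mk] at e3
          exact e3
      · rw [BP_corner_main _ _ _ _ hi hj, hw2]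
        exact BP_mat_congr w' _ _ _ _ (by simp only [Fin.val_mk])
          (by simp only [Fin.val_mk]; omega)
  · -- direction 2
    intro w hBes w'' hperm'' hw
    have hC := BP_corner_perm l hl w'' hperm''
    refine ⟨hBes, ⟨cornerForm F l w'', hC, hw⟩, ?_⟩
    rw [hw]
    exact BP_conj l hl w'' hC
end
end

section
/- A Weyl element w lies in B_{l−1}(SO_{2l}) if and only if w ∈ B(SO_{2l}) and there exists ω ∈ W(GL_{l−1}) with w = t_{l−1}(ω)·w̃_{l−1}. -/
/-!
Common definitions for formalizing "A Converse Theorem for Split SO(2l) over Finite Fields"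
(Hazeltine–Liu).  We work with the split special orthogonal groups realized as sets of
matrices over a finite field `F` of odd characteristic, and with complex representations
encoded as functions from matrices to linear endomorphisms that are multiplicative on the
relevant matrix group.
-/

open scoped Classical BigOperators

noncomputable section

namespace SOConverse

variable {F : Type} [Field F]

lemma perm_mul_transpose {n : ℕ} {x : Matrix (Fin n) (Fin n) F}
    (hx : IsPermMatrix x) : x * x.transpose = 1 := by
  ext i j
  rw [Matrix.mul_apply, Matrix.one_apply]
  by_cases hij : i = j
  · subst hij
    obtain ⟨k₀, hk₀, huniq⟩ := hx.2.1 i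
    rw [Finset.sum_eq_single k₀]
    · simp [Matrix.transpose_apply, hk₀]
    · intro k _ hk
      have h0 : x i k = 0 := by
        rcases hx.1 i k with h | h
        · exact h
        · exact absurd (huniq k h) hk
      simp [Matrix.transpose_apply, h0]
    · simp
  · rw [if_neg hij]
    apply Finset.sum_eq_zero
    intro k _
    rcases hx.1 i k with h | h
    · simp [h]
    · rcases hx.1 j k with h' | h'
      · simp [Matrix.transpose_apply, h']
      · exfalso
        obtain ⟨i₀, hi₀, hu⟩ := hx.2.2 k
        exact hij ((hu i h).trans (hu j h').symm)

lemma perm_inv {n : ℕ} {x : Matrix (Fin n) (Fin n) F}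
    (hx : IsPermMatrix x) : x⁻¹ = x.transpose :=
  Matrix.inv_eq_right_inv (perm_mul_transpose hx)

lemma matJ_mul_apply {n : ℕ} (A : Matrix (Fin n) (Fin n) F) (i j : Fin n) :
    (matJ F n * A) i j = A (Fin.rev i) j := by
  rw [Matrix.mul_apply, Finset.sum_eq_single (Fin.rev i)]
  · have : matJ F n i (Fin.rev i) = 1 := by
      simp only [matJ, Matrix.of_apply, Fin.val_rev]
      rw [if_pos]
      omega
    rw [this, one_mul]
  · intro k _ hk
    have : matJ F n i k = 0 := by
      simp only [matJ, Matrix.of_apply]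
      rw [if_neg]
      intro h
      apply hk
      apply Fin.ext
      simp only [Fin.val_rev]
      omega
    rw [this, zero_mul]
  · simp

lemma mul_matJ_apply {n : ℕ} (A : Matrix (Fin n) (Fin n) F) (i j : Fin n) :
    (A * matJ F n) i j = A i (Fin.rev j) := by
  rw [Matrix.mul_apply, Finset.sum_eq_single (Fin.rev j)]
  · have : matJ F n (Fin.rev j) j = 1 := by
      simp only [matJ, Matrix.of_apply, Fin.val_rev]
      rw [if_pos]
      omega
    rw [this, mul_one]
  · intro k _ hk
    have : matJ F n k j = 0 := by
      simp only [matJ, Matrix.of_apply]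
      rw [if_neg]
      intro h
      apply hk
      apply Fin.ext
      simp only [Fin.val_rev]
      omega
    rw [this, mul_zero]
  · simp

lemma astar_apply {n : ℕ} {x : Matrix (Fin n) (Fin n) F}
    (hx : IsPermMatrix x) (a b : Fin n) :
    astar x a b = x (Fin.rev a) (Fin.rev b) := by
  have h1 : x⁻¹.transpose = x := by rw [perm_inv hx, Matrix.transpose_transpose]
  show (matJ F n * x⁻¹.transpose * matJ F n) a b = _
  rw [h1, mul_matJ_apply, matJ_mul_apply]

/-- Column-reduction of a product: if column `j` of `B` has a `1` at row `k` and zeros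
elsewhere, then `(A*B) i j = A i k`. -/
lemma mul_apply_of_col {m : ℕ} (A B : Matrix (Fin m) (Fin m) F) (i j k : Fin m)
    (h1 : B k j = 1) (h0 : ∀ k', k' ≠ k → B k' j = 0) : (A * B) i j = A i k := by
  rw [Matrix.mul_apply, Finset.sum_eq_single k]
  · rw [h1, mul_one]
  · intro k' _ hk'; rw [h0 k' hk', mul_zero]
  · simp


/-- The index swap `l-1 ↔ l` implemented on `Fin (2*l)`. -/
def swp {l : ℕ} (i : Fin (2*l)) : Fin (2*l) :=
  ⟨if (i : ℕ) = l-1 then l else if (i : ℕ) = l then l-1 else (i : ℕ), by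
    have := i.isLt; split_ifs <;> omega⟩

lemma swp_val {l : ℕ} (i : Fin (2*l)) :
    (swp i : ℕ) = if (i : ℕ) = l-1 then l else if (i : ℕ) = l then l-1 else (i : ℕ) := rfl

lemma swp_swp {l : ℕ} (i : Fin (2*l)) : swp (swp i) = i := by
  have := i.isLt
  apply Fin.ext
  simp only [swp_val]
  split_ifs <;> omega

lemma cmat_eq_one_iff {l : ℕ} (hl : 2 ≤ l) (i k : Fin (2*l)) :
    cmat F l i k = if k = swp i then 1 else 0 := by
  have hi := i.isLt
  have hk := k.isLt
  simp only [cmat, Matrix.of_apply, Fin.ext_iff, swp_val]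
  split_ifs <;> first | rfl | (exfalso; omega)

lemma cmat_mul_apply {l : ℕ} (hl : 2 ≤ l) (A : Matrix (Fin (2*l)) (Fin (2*l)) F)
    (i j : Fin (2*l)) : (cmat F l * A) i j = A (swp i) j := by
  rw [Matrix.mul_apply, Finset.sum_eq_single (swp i)]
  · rw [cmat_eq_one_iff hl, if_pos rfl, one_mul]
  · intro k _ hk; rw [cmat_eq_one_iff hl, if_neg hk, zero_mul]
  · simp

lemma mul_cmat_apply {l : ℕ} (hl : 2 ≤ l) (A : Matrix (Fin (2*l)) (Fin (2*l)) F)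
    (i j : Fin (2*l)) : (A * cmat F l) i j = A i (swp j) := by
  rw [Matrix.mul_apply, Finset.sum_eq_single (swp j)]
  · have : cmat F l (swp j) j = 1 := by
      rw [cmat_eq_one_iff hl, if_pos (swp_swp j).symm]
    rw [this, mul_one]
  · intro k _ hk
    have : cmat F l k j = 0 := by
      rw [cmat_eq_one_iff hl, if_neg]
      intro h
      apply hk
      rw [h, swp_swp]
    rw [this, mul_zero]
  · simp


/-- Row index of the unique `1` in column `j` of `wtilden F l (l-1)`. -/
def ncol (l j : ℕ) : ℕ :=
  if j ≤ l-2 then j + l + 1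
  else if j = l-1 then (if l % 2 = 0 then l else l-1)
  else if j = l then (if l % 2 = 0 then l-1 else l)
  else j - (l+1)

/-- Row index of the unique `1` in column `j` of `wtildel F l`. -/
def wcol (l j : ℕ) : ℕ :=
  if l % 2 = 0 then (if j < l then j + l else j - l)
  else if j = 0 then l
  else if j ≤ l-2 then j + l
  else if j = l-1 then 0
  else if j = l then 2*l-1
  else if j = 2*l-1 then l-1
  else j - l

lemma ncol_lt {l : ℕ} (hl : 2 ≤ l) {j : ℕ} (hj : j < 2*l) : ncol l j < 2*l := by
  unfold ncol; split_ifs <;> omega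

lemma wcol_lt {l : ℕ} (hl : 2 ≤ l) {j : ℕ} (hj : j < 2*l) : wcol l j < 2*l := by
  unfold wcol; split_ifs <;> omega

lemma wtilden_apply {l : ℕ} (hl : 2 ≤ l) (k j : Fin (2*l)) :
    wtilden F l (l-1) k j = if (k : ℕ) = ncol l (j : ℕ) then 1 else 0 := by
  have hk := k.isLt; have hj := j.isLt
  simp only [wtilden, Matrix.of_apply, ncol, Fin.ext_iff]
  split_ifs <;> first | rfl | (exfalso; omega)

/-- Row index of the unique `1` in column `j` of `wtildelp F l`. -/
def pcol (l j : ℕ) : ℕ :=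
  if l % 2 = 0 then (if j < l then j + l else j - l)
  else if j = 0 then l-1
  else if j ≤ l-1 then j + l
  else if j = 2*l-1 then l
  else j - l

lemma wtildelp_apply {l : ℕ} (hl : 2 ≤ l) (k j : Fin (2*l)) :
    wtildelp F l k j = if (k : ℕ) = pcol l (j : ℕ) then 1 else 0 := by
  have hk := k.isLt; have hj := j.isLt
  unfold wtildelp
  by_cases hpar : l % 2 = 0
  · rw [if_pos hpar]
    simp only [Matrix.of_apply, pcol, if_pos hpar]
    split_ifs <;> first | rfl | (exfalso; omega)
  · rw [if_neg hpar]
    simp only [Matrix.of_apply, pcol, if_neg hpar]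
    split_ifs <;> first | rfl | (exfalso; omega)

set_option maxHeartbeats 2000000 in
lemma wtildel_apply {l : ℕ} (hl : 2 ≤ l) (k j : Fin (2*l)) :
    wtildel F l k j = if (k : ℕ) = wcol l (j : ℕ) then 1 else 0 := by
  have hk := k.isLt; have hj := j.isLt
  unfold wtildel
  by_cases hpar : l % 2 = 0
  · rw [if_pos hpar, wtildelp_apply hl]
    simp only [pcol, wcol, if_pos hpar]
  · rw [if_neg hpar]
    have e1 : (cmat F l * wtildelp F l * cmat F l) k j
        = wtildelp F l (swp k) (swp j) := by
      rw [mul_cmat_apply hl, cmat_mul_apply hl]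
    rw [e1, wtildelp_apply hl]
    simp only [swp_val, pcol, wcol, if_neg hpar]
    split_ifs <;> first | rfl | (exfalso; omega)

end SOConverse

namespace SOConverse
variable {F : Type} [Field F]

lemma tmat_apply {l n : ℕ} {x : Matrix (Fin n) (Fin n) F} (hx : IsPermMatrix x)
    (i k : Fin (2*l)) :
    tmat F l n x i k =
      if h : (i : ℕ) < n ∧ (k : ℕ) < n then x ⟨i, h.1⟩ ⟨k, h.2⟩
      else if h2 : 2*l-n ≤ (i : ℕ) ∧ 2*l-n ≤ (k : ℕ) then
        x ⟨2*l-1-(i : ℕ), by have := i.isLt; omega⟩ ⟨2*l-1-(k : ℕ), by have := k.isLt; omega⟩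
      else if (i : ℕ) = (k : ℕ) then 1 else 0 := by
  have hi := i.isLt; have hk := k.isLt
  simp only [tmat, Matrix.of_apply]
  by_cases h : (i : ℕ) < n ∧ (k : ℕ) < n
  · rw [if_pos h, dif_pos h, ent, dif_pos h]
  · rw [if_neg h, dif_neg h]
    by_cases h2 : 2*l-n ≤ (i : ℕ) ∧ 2*l-n ≤ (k : ℕ)
    · rw [if_pos h2, dif_pos h2, ent, dif_pos (by omega : (i:ℕ) - (2*l-n) < n ∧ (k:ℕ) - (2*l-n) < n)]
      rw [astar_apply hx]
      congr 1 <;> (apply Fin.ext; simp only [Fin.val_rev]; omega)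
    · rw [if_neg h2, dif_neg h2]
      simp only [Fin.ext_iff]

lemma prod_wtilden_ex {l : ℕ} (hl : 2 ≤ l) (A : Matrix (Fin (2*l)) (Fin (2*l)) F)
    (i j : Fin (2*l)) :
    ∃ k : Fin (2*l), (k : ℕ) = ncol l (j : ℕ) ∧ (A * wtilden F l (l-1)) i j = A i k := by
  refine ⟨⟨ncol l (j : ℕ), ncol_lt hl j.isLt⟩, rfl, ?_⟩
  apply mul_apply_of_col
  · rw [wtilden_apply hl, if_pos rfl]
  · intro k' hk'
    rw [wtilden_apply hl, if_neg]
    intro hh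
    exact hk' (Fin.ext hh)

lemma prod_wtildel_ex {l : ℕ} (hl : 2 ≤ l) (A : Matrix (Fin (2*l)) (Fin (2*l)) F)
    (i j : Fin (2*l)) :
    ∃ k : Fin (2*l), (k : ℕ) = wcol l (j : ℕ) ∧ (A * wtildel F l) i j = A i k := by
  refine ⟨⟨wcol l (j : ℕ), wcol_lt hl j.isLt⟩, rfl, ?_⟩
  apply mul_apply_of_col
  · rw [wtildel_apply hl, if_pos rfl]
  · intro k' hk'
    rw [wtildel_apply hl, if_neg]
    intro hh
    exact hk' (Fin.ext hh)

variable {F : Type} [Field F]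

lemma cornerForm_perm {l : ℕ} (hl : 2 ≤ l) {ω : Matrix (Fin (l-1)) (Fin (l-1)) F}
    (hω : IsPermMatrix ω) : IsPermMatrix (cornerForm F l ω) := by
  have hl1 : l - 1 < l := by omega
  refine ⟨?_, ?_, ?_⟩
  · intro i j
    simp only [cornerForm, Matrix.of_apply, ent]
    split_ifs with h1 h2 h3 h4
    · right; rfl
    · left; rfl
    · left; rfl
    · exact hω.1 _ _
    · left; rfl
  · intro i
    by_cases hi : (i : ℕ) = l - 1
    · refine ⟨⟨0, by omega⟩, by simp [cornerForm, hi], ?_⟩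
      intro j hj
      simp only [cornerForm, Matrix.of_apply, if_pos hi] at hj
      have hj0 : (j : ℕ) = 0 := by
        by_contra hne
        rw [if_neg hne] at hj
        exact zero_ne_one hj
      exact Fin.ext hj0
    · have hilt : (i : ℕ) < l - 1 := by have := i.isLt; omega
      obtain ⟨b₀, hb₀, hub⟩ := hω.2.1 ⟨(i : ℕ), hilt⟩
      refine ⟨⟨(b₀ : ℕ) + 1, by have := b₀.isLt; omega⟩, ?_, ?_⟩
      · simp only [cornerForm, Matrix.of_apply, if_neg hi, ent]
        rw [if_neg (by simp), dif_pos
          (⟨hilt, by have := b₀.isLt; simp only [Fin.val_mk]; omega⟩ :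
            (i:ℕ) < l - 1 ∧ ((⟨(b₀:ℕ)+1, by have := b₀.isLt; omega⟩ : Fin l) : ℕ) - 1 < l - 1)]
        convert hb₀ using 2 <;> (apply Fin.ext) <;> simp
      · intro j hj
        simp only [cornerForm, Matrix.of_apply, if_neg hi, ent] at hj
        have hj0 : (j : ℕ) ≠ 0 := by
          intro h; rw [if_pos h] at hj; exact zero_ne_one hj
        rw [if_neg hj0] at hj
        have hjb : (j : ℕ) - 1 < l - 1 := by have := j.isLt; omega
        rw [dif_pos ⟨hilt, hjb⟩] at hj
        have h2 := congrArg Fin.val (hub ⟨(j : ℕ) - 1, hjb⟩ hj)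
        apply Fin.ext
        simp only [Fin.val_mk] at h2 ⊢
        omega
  · intro j
    by_cases hj : (j : ℕ) = 0
    · refine ⟨⟨l - 1, hl1⟩, by simp [cornerForm, hj], ?_⟩
      intro i hi
      simp only [cornerForm, Matrix.of_apply] at hi
      apply Fin.ext
      simp only [Fin.val_mk]
      by_contra hne
      rw [if_neg hne, if_pos hj] at hi
      exact zero_ne_one hi
    · have hjb : (j : ℕ) - 1 < l - 1 := by have := j.isLt; omega
      obtain ⟨a₀, ha₀, hua⟩ := hω.2.2 ⟨(j : ℕ) - 1, hjb⟩
      refine ⟨⟨(a₀ : ℕ), by have := a₀.isLt; omega⟩, ?_, ?_⟩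
      · have hane : ((a₀ : ℕ)) ≠ l - 1 := by have := a₀.isLt; omega
        simp only [cornerForm, Matrix.of_apply, ent, Fin.val_mk]
        rw [if_neg hane, if_neg hj, dif_pos ⟨a₀.isLt, hjb⟩]
        convert ha₀ using 2 <;> (apply Fin.ext) <;> simp
      · intro i hi
        simp only [cornerForm, Matrix.of_apply, ent] at hi
        have hine : (i : ℕ) ≠ l - 1 := by
          intro h
          rw [if_pos h, if_neg hj] at hi
          exact zero_ne_one hi
        rw [if_neg hine, if_neg hj] at hi
        have hilt : (i : ℕ) < l - 1 := by have := i.isLt; omega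
        rw [dif_pos ⟨hilt, hjb⟩] at hi
        have h2 := congrArg Fin.val (hua ⟨(i : ℕ), hilt⟩ hi)
        apply Fin.ext
        simp only [Fin.val_mk] at h2 ⊢
        omega


lemma col_case {l : ℕ} (hl : 2 ≤ l) (j k1 k2 : Fin (2*l))
    (hk1 : (k1:ℕ) = ncol l (j:ℕ)) (hk2 : (k2:ℕ) = wcol l (j:ℕ)) :
    ((k1:ℕ) = (j:ℕ)+l+1 ∧ (k2:ℕ) = (j:ℕ)+l ∧ (j:ℕ) ≤ l-2) ∨
      ((k1:ℕ) = l ∧ (k2:ℕ) = 2*l-1 ∧ l % 2 = 0) ∨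
      ((k1:ℕ) = l-1 ∧ (k2:ℕ) = 0 ∧ l % 2 = 1) ∨
      ((k1:ℕ) = l-1 ∧ (k2:ℕ) = 0 ∧ l % 2 = 0) ∨
      ((k1:ℕ) = l ∧ (k2:ℕ) = 2*l-1 ∧ l % 2 = 1) ∨
      ((k1:ℕ) = (j:ℕ)-(l+1) ∧ (k2:ℕ) = (j:ℕ)-l ∧ l+1 ≤ (j:ℕ)) := by
  have hj := j.isLt
  by_cases hA : (j:ℕ) ≤ l-2
  · exact Or.inl ⟨by rw [hk1]; unfold ncol; split_ifs <;> omega,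
      by rw [hk2]; unfold wcol; split_ifs <;> omega, hA⟩
  · by_cases hC : (j:ℕ) = l-1
    · by_cases hp : l % 2 = 0
      · exact Or.inr (Or.inl ⟨by rw [hk1]; unfold ncol; split_ifs <;> omega,
          by rw [hk2]; unfold wcol; split_ifs <;> omega, hp⟩)
      · exact Or.inr (Or.inr (Or.inl ⟨by rw [hk1]; unfold ncol; split_ifs <;> omega,
          by rw [hk2]; unfold wcol; split_ifs <;> omega, by omega⟩))
    · by_cases hD : (j:ℕ) = l
      · by_cases hp : l % 2 = 0
        · exact Or.inr (Or.inr (Or.inr (Or.inl ⟨by rw [hk1]; unfold ncol; split_ifs <;> omega,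
            by rw [hk2]; unfold wcol; split_ifs <;> omega, hp⟩)))
        · exact Or.inr (Or.inr (Or.inr (Or.inr (Or.inl
            ⟨by rw [hk1]; unfold ncol; split_ifs <;> omega,
             by rw [hk2]; unfold wcol; split_ifs <;> omega, by omega⟩))))
      · exact Or.inr (Or.inr (Or.inr (Or.inr (Or.inr
          ⟨by rw [hk1]; unfold ncol; split_ifs <;> omega,
           by rw [hk2]; unfold wcol; split_ifs <;> omega, by omega⟩))))


set_option maxHeartbeats 2000000 in
lemma tmat_entry_eq {l : ℕ} (hl : 2 ≤ l) {ω : Matrix (Fin (l-1)) (Fin (l-1)) F}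
    (hω : IsPermMatrix ω) (i j k1 k2 : Fin (2*l))
    (hcase : ((k1:ℕ) = (j:ℕ)+l+1 ∧ (k2:ℕ) = (j:ℕ)+l ∧ (j:ℕ) ≤ l-2) ∨
      ((k1:ℕ) = l ∧ (k2:ℕ) = 2*l-1 ∧ l % 2 = 0) ∨
      ((k1:ℕ) = l-1 ∧ (k2:ℕ) = 0 ∧ l % 2 = 1) ∨
      ((k1:ℕ) = l-1 ∧ (k2:ℕ) = 0 ∧ l % 2 = 0) ∨
      ((k1:ℕ) = l ∧ (k2:ℕ) = 2*l-1 ∧ l % 2 = 1) ∨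
      ((k1:ℕ) = (j:ℕ)-(l+1) ∧ (k2:ℕ) = (j:ℕ)-l ∧ l+1 ≤ (j:ℕ))) :
    tmat F l (l-1) ω i k1 = tmat F l l (cornerForm F l ω) i k2 := by
  have hcf := cornerForm_perm hl hω
  have hi := i.isLt; have hj := j.isLt; have hk1b := k1.isLt; have hk2b := k2.isLt
  rw [tmat_apply hω, tmat_apply hcf]
  simp only [cornerForm, Matrix.of_apply, ent, Fin.val_mk]
  rcases hcase with ⟨v1,v2,hc⟩|⟨v1,v2,hc⟩|⟨v1,v2,hc⟩|⟨v1,v2,hc⟩|⟨v1,v2,hc⟩|⟨v1,v2,hc⟩ <;>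
    split_ifs <;>
      first
        | rfl
        | (exfalso; omega)
        | (exact congrArg₂ ω (by simp only [Fin.mk.injEq] <;> omega)
            (by simp only [Fin.mk.injEq] <;> omega))

lemma key_eq {l : ℕ} (hl : 2 ≤ l) {ω : Matrix (Fin (l-1)) (Fin (l-1)) F}
    (hω : IsPermMatrix ω) :
    tmat F l (l-1) ω * wtilden F l (l-1) = tmat F l l (cornerForm F l ω) * wtildel F l := by
  ext i j
  obtain ⟨k1, hk1, e1⟩ := prod_wtilden_ex hl (tmat F l (l-1) ω) i j
  obtain ⟨k2, hk2, e2⟩ := prod_wtildel_ex hl (tmat F l l (cornerForm F l ω)) i j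
  rw [e1, e2]
  exact tmat_entry_eq hl hω i j k1 k2 (col_case hl j k1 k2 hk1 hk2)

set_option maxHeartbeats 1000000 in
lemma tmat_swap {l : ℕ} (hl : 2 ≤ l) {ω : Matrix (Fin (l-1)) (Fin (l-1)) F}
    (hω : IsPermMatrix ω) (i m : Fin (2*l)) :
    tmat F l (l-1) ω (swp i) (swp m) = tmat F l (l-1) ω i m := by
  have hi := i.isLt; have hm := m.isLt
  rw [tmat_apply hω, tmat_apply hω]
  simp only [swp_val]
  split_ifs <;>
    first
      | rfl
      | (exfalso; omega)
      | (exact congrArg₂ ω (by simp only [Fin.mk.injEq] <;> omega)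
          (by simp only [Fin.mk.injEq] <;> omega))

lemma cinv_lemma {l : ℕ} (hl : 2 ≤ l) {ω : Matrix (Fin (l-1)) (Fin (l-1)) F}
    (hω : IsPermMatrix ω) :
    cmat F l * (tmat F l (l-1) ω * wtilden F l (l-1)) * cmat F l
      = tmat F l (l-1) ω * wtilden F l (l-1) := by
  ext i j
  have e0 : (cmat F l * (tmat F l (l-1) ω * wtilden F l (l-1)) * cmat F l) i j
      = (tmat F l (l-1) ω * wtilden F l (l-1)) (swp i) (swp j) := by
    rw [mul_cmat_apply hl, cmat_mul_apply hl]
  rw [e0]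
  obtain ⟨k, hk, e⟩ := prod_wtilden_ex hl (tmat F l (l-1) ω) i j
  obtain ⟨k', hk', e'⟩ := prod_wtilden_ex hl (tmat F l (l-1) ω) (swp i) (swp j)
  rw [e, e']
  have hj := j.isLt; have hkb := k.isLt
  have hkk : k' = swp k := by
    apply Fin.ext
    rw [hk', swp_val, swp_val, hk]
    unfold ncol
    split_ifs <;> omega
  rw [hkk, tmat_swap hl hω]

set_option maxHeartbeats 1000000 in
lemma corner_entry_one {l : ℕ} (hl : 2 ≤ l) {w' : Matrix (Fin l) (Fin l) F}
    (hw' : IsPermMatrix w')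
    (hc : cmat F l * (tmat F l l w' * wtildel F l) * cmat F l
        = tmat F l l w' * wtildel F l) :
    w' ⟨l-1, by omega⟩ ⟨0, by omega⟩ = 1 := by
  obtain ⟨r, hr⟩ : ∃ r : Fin l, (r : ℕ) = l-1 := ⟨⟨l-1, by omega⟩, rfl⟩
  obtain ⟨k₀, hk₀1, hk₀u⟩ := hw'.2.1 r
  have hk₀b := k₀.isLt
  by_cases h0 : (k₀ : ℕ) = 0
  · have h1 : (⟨l-1, by omega⟩ : Fin l) = r := Fin.ext (by simp only [Fin.val_mk]; omega)
    have h2 : (⟨0, by omega⟩ : Fin l) = k₀ := Fin.ext (by simp only [Fin.val_mk]; omega)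
    rw [h1, h2]; exact hk₀1
  · exfalso
    obtain ⟨iT, hiT⟩ : ∃ i : Fin (2*l), (i : ℕ) = l-1 := ⟨⟨l-1, by omega⟩, rfl⟩
    obtain ⟨iB, hiB⟩ : ∃ i : Fin (2*l), (i : ℕ) = l := ⟨⟨l, by omega⟩, rfl⟩
    obtain ⟨j₀, hj₀⟩ : ∃ j : Fin (2*l), (j : ℕ) = (k₀ : ℕ) + l := ⟨⟨(k₀:ℕ)+l, by omega⟩, rfl⟩
    have hent : (cmat F l * (tmat F l l w' * wtildel F l) * cmat F l) iT j₀
        = (tmat F l l w' * wtildel F l) iT j₀ := by rw [hc]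
    rw [mul_cmat_apply hl, cmat_mul_apply hl] at hent
    have hswpi : swp iT = iB := by
      apply Fin.ext; rw [swp_val, hiT, hiB]; split_ifs <;> omega
    have hswpj : swp j₀ = j₀ := by
      apply Fin.ext; rw [swp_val, hj₀]; split_ifs <;> omega
    rw [hswpi, hswpj] at hent
    obtain ⟨k, hk, e⟩ := prod_wtildel_ex hl (tmat F l l w') iB j₀
    obtain ⟨k', hk', e'⟩ := prod_wtildel_ex hl (tmat F l l w') iT j₀
    rw [e, e'] at hent
    have hkv : (k : ℕ) = (k₀ : ℕ) := by
      rw [hk, hj₀]; unfold wcol; split_ifs <;> omega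
    have hk'v : (k' : ℕ) = (k₀ : ℕ) := by
      rw [hk', hj₀]; unfold wcol; split_ifs <;> omega
    rw [tmat_apply hw', tmat_apply hw'] at hent
    rw [dif_neg (by omega), dif_neg (by omega), if_neg (by omega),
        dif_pos (by omega : (iT : ℕ) < l ∧ (k' : ℕ) < l)] at hent
    -- hent : 0 = w' ⟨iT,_⟩ ⟨k',_⟩
    have hone : w' ⟨(iT : ℕ), by omega⟩ ⟨(k' : ℕ), by omega⟩ = 1 := by
      have e1 : (⟨(k' : ℕ), by omega⟩ : Fin l) = k₀ := Fin.ext (by simp only [Fin.val_mk]; omega)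
      have e2 : (⟨(iT : ℕ), by omega⟩ : Fin l) = r := Fin.ext (by simp only [Fin.val_mk]; omega)
      rw [e1, e2]
      exact hk₀1
    rw [hone] at hent
    exact zero_ne_one (α := F) hent

lemma exists_cornerForm {l : ℕ} (hl : 2 ≤ l) {w' : Matrix (Fin l) (Fin l) F}
    (hw' : IsPermMatrix w') (h10 : w' ⟨l-1, by omega⟩ ⟨0, by omega⟩ = 1) :
    ∃ ω : Matrix (Fin (l-1)) (Fin (l-1)) F,
      IsPermMatrix ω ∧ cornerForm F l ω = w' := by
  set ω : Matrix (Fin (l-1)) (Fin (l-1)) F :=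
    Matrix.of (fun a b : Fin (l-1) =>
      w' ⟨(a : ℕ), by have := a.isLt; omega⟩ ⟨(b : ℕ) + 1, by have := b.isLt; omega⟩) with hωdef
  have hωapp : ∀ a b : Fin (l-1),
      ω a b = w' ⟨(a : ℕ), by have := a.isLt; omega⟩ ⟨(b : ℕ) + 1, by have := b.isLt; omega⟩ :=
    fun a b => rfl
  -- row l-1 of w' has its unique 1 in column 0, column 0 has unique 1 in row l-1
  have hrow : ∀ j : Fin l, (j : ℕ) ≠ 0 → w' ⟨l-1, by omega⟩ j = 0 := by
    intro j hj
    obtain ⟨c, hc1, hcu⟩ := hw'.2.1 ⟨l-1, by omega⟩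
    have hc0 : c = ⟨0, by omega⟩ := (hcu _ h10).symm
    rcases hw'.1 ⟨l-1, by omega⟩ j with h | h
    · exact h
    · exfalso
      have := hcu _ h
      rw [hc0] at this
      exact hj (by rw [this])
  have hcol : ∀ i : Fin l, (i : ℕ) ≠ l-1 → w' i ⟨0, by omega⟩ = 0 := by
    intro i hi
    obtain ⟨r0, hr1, hru⟩ := hw'.2.2 ⟨0, by omega⟩
    have hr0 : r0 = ⟨l-1, by omega⟩ := (hru _ h10).symm
    rcases hw'.1 i ⟨0, by omega⟩ with h | h
    · exact h
    · exfalso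
      have := hru _ h
      rw [hr0] at this
      exact hi (by rw [this])
  have hcf : cornerForm F l ω = w' := by
    ext i j
    have hi := i.isLt; have hj := j.isLt
    simp only [cornerForm, Matrix.of_apply, ent]
    by_cases h1 : (i : ℕ) = l-1
    · rw [if_pos h1]
      by_cases h2 : (j : ℕ) = 0
      · rw [if_pos h2]
        have ei : (⟨l-1, by omega⟩ : Fin l) = i := Fin.ext (by simp only [Fin.val_mk]; omega)
        have ej : (⟨0, by omega⟩ : Fin l) = j := Fin.ext (by simp only [Fin.val_mk]; omega)
        rw [← ei, ← ej, h10]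
      · rw [if_neg h2]
        have ei : (⟨l-1, by omega⟩ : Fin l) = i := Fin.ext (by simp only [Fin.val_mk]; omega)
        rw [← ei] at *
        exact (hrow j h2).symm
    · rw [if_neg h1]
      by_cases h2 : (j : ℕ) = 0
      · rw [if_pos h2]
        have ej : (⟨0, by omega⟩ : Fin l) = j := Fin.ext (by simp only [Fin.val_mk]; omega)
        rw [← ej]
        exact (hcol i h1).symm
      · rw [if_neg h2, dif_pos (by omega : (i : ℕ) < l-1 ∧ (j : ℕ) - 1 < l-1)]
        rw [hωapp]
        congr 1 <;> apply Fin.ext <;> simp only [Fin.val_mk] <;> omega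
  refine ⟨ω, ?_, hcf⟩
  -- permutation property of ω, from that of cornerForm ω = w'... easier directly:
  constructor
  · intro a b
    rw [hωapp]
    exact hw'.1 _ _
  constructor
  · intro a
    obtain ⟨c, hc1, hcu⟩ := hw'.2.1 ⟨(a : ℕ), by have := a.isLt; omega⟩
    have hc0 : (c : ℕ) ≠ 0 := by
      intro h
      have hc' : c = ⟨0, by omega⟩ := Fin.ext (by simp only [Fin.val_mk]; omega)
      rw [hc'] at hc1
      have := hcol ⟨(a : ℕ), by have := a.isLt; omega⟩ (by simp only [Fin.val_mk]; have := a.isLt; omega)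
      rw [this] at hc1
      exact zero_ne_one (α := F) hc1
    have hcb := c.isLt
    refine ⟨⟨(c : ℕ) - 1, by omega⟩, ?_, ?_⟩
    · show ω _ _ = 1
      rw [hωapp]
      convert hc1 using 2
      all_goals (apply Fin.ext <;> (try simp only [Fin.val_mk]) <;> omega)
    · intro b hb
      rw [hωapp] at hb
      have := hcu _ hb
      apply Fin.ext
      have hv := congrArg Fin.val this
      simp only [Fin.val_mk] at hv ⊢
      omega
  · intro b
    obtain ⟨r0, hr1, hru⟩ := hw'.2.2 ⟨(b : ℕ) + 1, by have := b.isLt; omega⟩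
    have hr0 : (r0 : ℕ) ≠ l-1 := by
      intro h
      have hr' : r0 = ⟨l-1, by omega⟩ := Fin.ext (by simp only [Fin.val_mk]; omega)
      rw [hr'] at hr1
      have := hrow ⟨(b : ℕ) + 1, by have := b.isLt; omega⟩ (by simp only [Fin.val_mk]; omega)
      rw [this] at hr1
      exact zero_ne_one (α := F) hr1
    have hrb := r0.isLt
    refine ⟨⟨(r0 : ℕ), by omega⟩, ?_, ?_⟩
    · show ω _ _ = 1
      rw [hωapp]
      convert hr1 using 2
      all_goals (apply Fin.ext <;> (try simp only [Fin.val_mk]) <;> omega)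
    · intro a ha
      rw [hωapp] at ha
      have := hru _ ha
      apply Fin.ext
      have hv := congrArg Fin.val this
      simp only [Fin.val_mk] at hv ⊢
      omega
end SOConverse

open SOConverse in
/-- A Weyl element lies in `B_{l-1}(SO_{2l})` if and only if it lies in the Bessel support
and has the form `t_{l-1}(ω) w̃_{l-1}` for some `ω ∈ W(GL_{l-1})`. -/
theorem Bsetlm1_characterization
    (F : Type) [Field F] [Fintype F] (hF : ringChar F ≠ 2)
    (l : ℕ) (hl : 2 ≤ l)
    (w : Matrix (Fin (2*l)) (Fin (2*l)) F) :
    w ∈ Bsetlm1 F l ↔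
      (w ∈ BesselSupport F l ∧ ∃ ω : Matrix (Fin (l-1)) (Fin (l-1)) F,
        IsPermMatrix ω ∧ w = tmat F l (l-1) ω * wtilden F l (l-1)) := by
  simp only [Bsetlm1, Set.mem_setOf_eq]
  constructor
  · rintro ⟨hB, ⟨w', hw', heq⟩, hcinv⟩
    refine ⟨hB, ?_⟩
    have hc' : cmat F l * (tmat F l l w' * wtildel F l) * cmat F l
        = tmat F l l w' * wtildel F l := by
      rw [← heq]; exact hcinv
    obtain ⟨ω, hωp, hcf⟩ := exists_cornerForm hl hw' (corner_entry_one hl hw' hc')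
    exact ⟨ω, hωp, by rw [heq, ← hcf, ← key_eq hl hωp]⟩
  · rintro ⟨hB, ω, hω, heq⟩
    refine ⟨hB, ⟨cornerForm F l ω, cornerForm_perm hl hω, by rw [heq, key_eq hl hω]⟩, ?_⟩
    rw [heq]
    exact cinv_lemma hl hω
end
end
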